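/- arXiv:2106.02919 — 5 statements merged into one kernel-verified Lean document; each statement's English description precedes it below -/
import Mathlib

section
/- Let G be a simple graph with a pendant vertex v (a vertex of degree 1). Then the number of perfect matchings of the vertex-edge graph M(G) equals the number of perfect matchings of the vertex-edge graph M(G - v), where G - v is the graph obtained from G by deleting v (and its incident edge). -/
variable {V : Type*}

/-- The vertex-edge graph (middle graph) of `G`: vertices are `V(G) ⊕ E(G)`;
two `e`-vertices are adjacent iff the corresponding edges of `G` are distinct and share
an endpoint; a `v`-vertex and an `e`-vertex are adjacent iff the vertex is an endpoint of
the edge; no two `v`-vertices are adjacent. -/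
def middleGraph (G : SimpleGraph V) : SimpleGraph (V ⊕ G.edgeSet) where
  Adj a b :=
    match a, b with
    | Sum.inl _, Sum.inl _ => False
    | Sum.inl u, Sum.inr e => u ∈ (e : Sym2 V)
    | Sum.inr e, Sum.inl u => u ∈ (e : Sym2 V)
    | Sum.inr e, Sum.inr f => e ≠ f ∧ ∃ v, v ∈ (e : Sym2 V) ∧ v ∈ (f : Sym2 V)
  symm := ⟨by
    rintro (u | e) (v | f) h
    · exact h.elim
    · exact h
    · exact h
    · exact ⟨h.1.symm, h.2.imp fun v hv => ⟨hv.2, hv.1⟩⟩⟩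
  loopless := ⟨by
    rintro (u | e) h
    · exact h
    · exact h.1 rfl⟩

/-- The line graph of `G`, with vertex set the edge set of `G`; two edges are adjacent
iff they are distinct and share an endpoint. -/
def lineGraph (G : SimpleGraph V) : SimpleGraph G.edgeSet where
  Adj e f := e ≠ f ∧ ∃ v, v ∈ (e : Sym2 V) ∧ v ∈ (f : Sym2 V)
  symm := ⟨fun e f h => ⟨h.1.symm, h.2.imp fun v hv => ⟨hv.2, hv.1⟩⟩⟩
  loopless := ⟨fun e h => h.1 rfl⟩

/-- `P` is a perfect matching (dimer covering) of `H`, viewed as a set of edges: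
all members are edges of `H`, distinct members share no vertex, and every vertex of `H`
lies in some member. -/
def IsPerfMatchSet {W : Type*} (H : SimpleGraph W) (P : Set (Sym2 W)) : Prop :=
  P ⊆ H.edgeSet ∧
  (∀ p ∈ P, ∀ q ∈ P, p ≠ q → ∀ a, a ∈ p → a ∉ q) ∧
  (∀ w : W, ∃ p ∈ P, w ∈ p)

/-- The number of perfect matchings (dimer coverings) of `H`. -/
noncomputable def pmCount {W : Type*} (H : SimpleGraph W) : ℕ :=
  {P : Set (Sym2 W) | IsPerfMatchSet H P}.ncard

lemma induce_edge_mem_top {G : SimpleGraph V} {S : Set V} {e : Sym2 ↥S}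
    (he : e ∈ (G.induce S).edgeSet) : Sym2.map Subtype.val e ∈ G.edgeSet := by
  induction e using Sym2.ind with
  | _ a b => simpa using he

/-- lift an edge of the induced graph to an edge of `G` -/
def liftE (G : SimpleGraph V) (S : Set V) (e : (G.induce S).edgeSet) : G.edgeSet :=
  ⟨Sym2.map Subtype.val e.1, induce_edge_mem_top e.2⟩

lemma liftE_injective (G : SimpleGraph V) (S : Set V) :
    Function.Injective (liftE G S) := by
  intro e f h
  exact Subtype.ext (Sym2.map.injective Subtype.val_injective (congrArg Subtype.val h))

/-- the natural injection from the vertex set of the middle graph of an induced subgraph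
into the vertex set of the middle graph of `G` -/
def pendIota (G : SimpleGraph V) (S : Set V) :
    (↥S ⊕ (G.induce S).edgeSet) → (V ⊕ G.edgeSet) :=
  Sum.map Subtype.val (liftE G S)

lemma pendIota_injective (G : SimpleGraph V) (S : Set V) :
    Function.Injective (pendIota G S) :=
  Sum.map_injective.mpr ⟨Subtype.val_injective, liftE_injective G S⟩

lemma mem_liftE {G : SimpleGraph V} {S : Set V} {e : (G.induce S).edgeSet} {x : V} :
    x ∈ ((liftE G S e : G.edgeSet) : Sym2 V) ↔ ∃ a ∈ (e : Sym2 ↥S), (a : V) = x :=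
  Sym2.mem_map

lemma adj_pendIota {G : SimpleGraph V} {S : Set V}
    {a b : ↥S ⊕ (G.induce S).edgeSet} :
    (middleGraph (G.induce S)).Adj a b ↔
      (middleGraph G).Adj (pendIota G S a) (pendIota G S b) := by
  rcases a with w | e <;> rcases b with w' | e'
  · exact Iff.rfl
  · show (w ∈ (e' : Sym2 ↥S)) ↔ ((w : V) ∈ ((liftE G S e' : G.edgeSet) : Sym2 V))
    rw [mem_liftE]
    exact ⟨fun h => ⟨w, h, rfl⟩, fun ⟨a, ha, h⟩ => (Subtype.val_injective h) ▸ ha⟩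
  · show (w' ∈ (e : Sym2 ↥S)) ↔ ((w' : V) ∈ ((liftE G S e : G.edgeSet) : Sym2 V))
    rw [mem_liftE]
    exact ⟨fun h => ⟨w', h, rfl⟩, fun ⟨a, ha, h⟩ => (Subtype.val_injective h) ▸ ha⟩
  · show (e ≠ e' ∧ ∃ x, x ∈ (e : Sym2 ↥S) ∧ x ∈ (e' : Sym2 ↥S)) ↔
      (liftE G S e ≠ liftE G S e' ∧ ∃ y, y ∈ ((liftE G S e : G.edgeSet) : Sym2 V) ∧
        y ∈ ((liftE G S e' : G.edgeSet) : Sym2 V))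
    constructor
    · rintro ⟨hne, x, hx1, hx2⟩
      exact ⟨fun h => hne (liftE_injective G S h), x,
        mem_liftE.mpr ⟨x, hx1, rfl⟩, mem_liftE.mpr ⟨x, hx2, rfl⟩⟩
    · rintro ⟨hne, y, hy1, hy2⟩
      obtain ⟨a, ha, rfl⟩ := mem_liftE.mp hy1
      obtain ⟨b, hb, hba⟩ := mem_liftE.mp hy2
      exact ⟨fun h => hne (congrArg _ h), a, ha, Subtype.val_injective hba ▸ hb⟩

lemma middleGraph_edge_map {G : SimpleGraph V} {S : Set V}
    {q : Sym2 (↥S ⊕ (G.induce S).edgeSet)} :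
    q ∈ (middleGraph (G.induce S)).edgeSet ↔
      Sym2.map (pendIota G S) q ∈ (middleGraph G).edgeSet := by
  induction q using Sym2.ind with
  | _ a b =>
    rw [Sym2.map_pair_eq, SimpleGraph.mem_edgeSet, SimpleGraph.mem_edgeSet]
    exact adj_pendIota

lemma sym2_mem_range {α β : Type*} {f : α → β} {z : Sym2 β}
    (h : ∀ x ∈ z, x ∈ Set.range f) : z ∈ Set.range (Sym2.map f) := by
  induction z using Sym2.ind with
  | _ x y =>
    obtain ⟨a, ha⟩ := h x (Sym2.mem_mk_left x y)
    obtain ⟨b, hb⟩ := h y (Sym2.mem_mk_right x y)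
    exact ⟨s(a, b), by rw [Sym2.map_pair_eq, ha, hb]⟩

/-- If `v` is a pendant vertex of `G`, then the vertex-edge graphs of `G`
and of `G - v` have the same number of perfect matchings. -/
theorem middle_graph_pm_delete_pendant {V : Type*} [Fintype V] [DecidableEq V]
    (G : SimpleGraph V) [DecidableRel G.Adj] (v : V) (hv : G.degree v = 1) :
    pmCount (middleGraph G) = pmCount (middleGraph (G.induce {w | w ≠ v})) := by
  classical
  obtain ⟨u, hu⟩ := Finset.card_eq_one.mp hv
  have hadj : ∀ w, G.Adj v w ↔ w = u := fun w => by
    rw [← SimpleGraph.mem_neighborFinset, hu, Finset.mem_singleton]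
  have huv : G.Adj v u := (hadj u).mpr rfl
  have hraw : ∀ z, z ∈ G.edgeSet → v ∈ z → z = s(v, u) := by
    intro z
    induction z using Sym2.ind with
    | _ a b =>
      intro hz hvz
      rw [SimpleGraph.mem_edgeSet] at hz
      rcases Sym2.mem_iff.mp hvz with h | h
      · subst h
        rw [(hadj b).mp hz]
      · subst h
        rw [(hadj a).mp hz.symm]
        exact Sym2.eq_swap
  set ι := pendIota G {w | w ≠ v} with hιdef
  set e₀ : G.edgeSet := ⟨s(v, u), huv⟩ with he₀def
  set m₀ : Sym2 (V ⊕ G.edgeSet) := s(Sum.inl v, Sum.inr e₀) with hm₀def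
  have hve₀ : v ∈ (e₀ : Sym2 V) := by rw [he₀def]; exact Sym2.mem_mk_left v u
  have hkey : ∀ x : ↥{w | w ≠ v} ⊕ (G.induce {w | w ≠ v}).edgeSet,
      ι x ≠ Sum.inl v ∧ ι x ≠ Sum.inr e₀ := by
    rintro (w | e)
    · exact ⟨fun h => w.2 (Sum.inl.inj h), fun h => Sum.inl_ne_inr h⟩
    · refine ⟨fun h => Sum.inr_ne_inl h, fun h => ?_⟩
      have hmem : v ∈ ((liftE G {w | w ≠ v} e : G.edgeSet) : Sym2 V) := by
        rw [Sum.inr.inj h]; exact hve₀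
      obtain ⟨a, _, ha⟩ := mem_liftE.mp hmem
      exact a.2 ha
  have hunliftraw : ∀ z, z ∈ G.edgeSet → v ∉ z →
      ∃ e' : (G.induce {w | w ≠ v}).edgeSet,
        ((liftE G {w | w ≠ v} e' : G.edgeSet) : Sym2 V) = z := by
    intro z
    induction z using Sym2.ind with
    | _ a b =>
      intro hz hvz
      have ha : a ≠ v := fun h => hvz (by rw [← h]; exact Sym2.mem_mk_left a b)
      have hb : b ≠ v := fun h => hvz (by rw [← h]; exact Sym2.mem_mk_right a b)
      have hadj' : (G.induce {w | w ≠ v}).Adj ⟨a, ha⟩ ⟨b, hb⟩ :=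
        (SimpleGraph.mem_edgeSet G).mp hz
      exact ⟨⟨s((⟨a, ha⟩ : ↥{w | w ≠ v}), ⟨b, hb⟩),
        (SimpleGraph.mem_edgeSet _).mpr hadj'⟩,
        Sym2.map_pair_eq _ _ _⟩
  have hunlift : ∀ e : G.edgeSet, e ≠ e₀ →
      ∃ e', liftE G {w | w ≠ v} e' = e := by
    intro e hne
    have hv' : v ∉ (e : Sym2 V) := fun hv' =>
      hne (Subtype.ext ((hraw e.1 e.2 hv').trans (by rw [he₀def])))
    obtain ⟨e', he'⟩ := hunliftraw e.1 e.2 hv'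
    exact ⟨e', Subtype.ext he'⟩
  have hm₀edge : m₀ ∈ (middleGraph G).edgeSet := by
    rw [hm₀def, SimpleGraph.mem_edgeSet]
    exact hve₀
  have hforce : ∀ p, p ∈ (middleGraph G).edgeSet →
      (Sum.inl v : V ⊕ G.edgeSet) ∈ p → p = m₀ := by
    intro p
    induction p using Sym2.ind with
    | _ x y =>
      intro hpe hvp
      rw [SimpleGraph.mem_edgeSet] at hpe
      rcases Sym2.mem_iff.mp hvp with h | h
      · subst h
        rcases y with w | e
        · exact hpe.elim
        · have : e = e₀ := Subtype.ext (hraw e.1 e.2 hpe)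
          rw [this, hm₀def]
      · subst h
        rcases x with w | e
        · exact hpe.elim
        · have : e = e₀ := Subtype.ext (hraw e.1 e.2 hpe)
          rw [this, hm₀def, Sym2.eq_swap]
  have himgnotm : ∀ (Q : Set (Sym2 (↥{w | w ≠ v} ⊕ (G.induce {w | w ≠ v}).edgeSet))),
      m₀ ∉ Sym2.map ι '' Q := by
    rintro Q ⟨q, _, hqe⟩
    have hmem : (Sum.inl v : V ⊕ G.edgeSet) ∈ Sym2.map ι q := by
      rw [hqe, hm₀def]; exact Sym2.mem_mk_left _ _
    obtain ⟨b, _, hb⟩ := Sym2.mem_map.mp hmem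
    exact (hkey b).1 hb
  have himginj : Function.Injective (Sym2.map ι) :=
    Sym2.map.injective (pendIota_injective G _)
  -- the bijection
  have hset : {P | IsPerfMatchSet (middleGraph G) P} =
      (fun Q => insert m₀ (Sym2.map ι '' Q)) ''
        {Q | IsPerfMatchSet (middleGraph (G.induce {w | w ≠ v})) Q} := by
    ext P
    simp only [Set.mem_setOf_eq, Set.mem_image]
    constructor
    · -- a PM of M(G) comes from a PM of M(G')
      intro hP
      obtain ⟨p₀, hp₀, hvp₀⟩ := hP.2.2 (Sum.inl v)
      have hm₀P : m₀ ∈ P := hforce p₀ (hP.1 hp₀) hvp₀ ▸ hp₀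
      have hrange : ∀ p ∈ P, p ≠ m₀ → p ∈ Set.range (Sym2.map ι) := by
        intro p hp hne
        apply sym2_mem_range
        intro x hx
        have hxm : x ∉ m₀ := hP.2.1 p hp m₀ hm₀P hne x hx
        rcases x with w | e
        · have hwv : w ≠ v := fun h => hxm (by rw [h, hm₀def]; exact Sym2.mem_mk_left _ _)
          exact ⟨Sum.inl ⟨w, hwv⟩, rfl⟩
        · have hee : e ≠ e₀ := fun h => hxm (by rw [h, hm₀def]; exact Sym2.mem_mk_right _ _)
          obtain ⟨e', he'⟩ := hunlift e hee
          exact ⟨Sum.inr e', congrArg Sum.inr he'⟩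
      refine ⟨Sym2.map ι ⁻¹' (P \ {m₀}), ⟨?_, ?_, ?_⟩, ?_⟩
      · -- edges
        intro q hq
        exact middleGraph_edge_map.mpr (hP.1 hq.1)
      · -- disjointness
        intro q₁ hq₁ q₂ hq₂ hne a ha₁ ha₂
        exact hP.2.1 _ hq₁.1 _ hq₂.1 (fun h => hne (himginj h)) (ι a)
          (Sym2.mem_map.mpr ⟨a, ha₁, rfl⟩) (Sym2.mem_map.mpr ⟨a, ha₂, rfl⟩)
      · -- covering
        intro w'
        obtain ⟨p, hp, hwp⟩ := hP.2.2 (ι w')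
        have hne : p ≠ m₀ := by
          rintro rfl
          rcases Sym2.mem_iff.mp (by rwa [hm₀def] at hwp) with h | h
          · exact (hkey w').1 h
          · exact (hkey w').2 h
        obtain ⟨q, hq⟩ := hrange p hp hne
        refine ⟨q, by rw [Set.mem_preimage, hq]; exact ⟨hp, hne⟩, ?_⟩
        rw [← hq] at hwp
        obtain ⟨b, hb, hbe⟩ := Sym2.mem_map.mp hwp
        rwa [pendIota_injective G _ hbe] at hb
      · -- the image is P
        have himg : Sym2.map ι '' (Sym2.map ι ⁻¹' (P \ {m₀})) = P \ {m₀} :=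
          Set.image_preimage_eq_iff.mpr (fun p hp => hrange p hp.1 hp.2)
        rw [himg, Set.insert_diff_singleton, Set.insert_eq_self.mpr hm₀P]
    · -- a PM of M(G') gives a PM of M(G)
      rintro ⟨Q, hQ, rfl⟩
      refine ⟨?_, ?_, ?_⟩
      · -- edges
        rintro p (rfl | ⟨q, hq, rfl⟩)
        · exact hm₀edge
        · exact middleGraph_edge_map.mp (hQ.1 hq)
      · -- disjointness
        rintro p (rfl | ⟨q₁, hq₁, rfl⟩) q' (rfl | ⟨q₂, hq₂, rfl⟩) hne a ha₁ ha₂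
        · exact hne rfl
        · obtain ⟨b, _, hb⟩ := Sym2.mem_map.mp ha₂
          rcases Sym2.mem_iff.mp (by rwa [hm₀def] at ha₁) with h | h
          · exact (hkey b).1 (hb.trans h)
          · exact (hkey b).2 (hb.trans h)
        · obtain ⟨b, _, hb⟩ := Sym2.mem_map.mp ha₁
          rcases Sym2.mem_iff.mp (by rwa [hm₀def] at ha₂) with h | h
          · exact (hkey b).1 (hb.trans h)
          · exact (hkey b).2 (hb.trans h)
        · obtain ⟨b₁, hb₁, hbe₁⟩ := Sym2.mem_map.mp ha₁
          obtain ⟨b₂, hb₂, hbe₂⟩ := Sym2.mem_map.mp ha₂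
          have hb12 : b₁ = b₂ := pendIota_injective G _ (hbe₁.trans hbe₂.symm)
          exact hQ.2.1 q₁ hq₁ q₂ hq₂ (fun h => hne (congrArg _ h)) b₁ hb₁ (hb12 ▸ hb₂)
      · -- covering
        rintro (w | e)
        · by_cases hw : w = v
          · subst hw
            exact ⟨m₀, Set.mem_insert _ _, by rw [hm₀def]; exact Sym2.mem_mk_left _ _⟩
          · obtain ⟨q, hq, hmem⟩ := hQ.2.2 (Sum.inl ⟨w, hw⟩)
            exact ⟨Sym2.map ι q, Set.mem_insert_of_mem _ ⟨q, hq, rfl⟩,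
              Sym2.mem_map.mpr ⟨Sum.inl ⟨w, hw⟩, hmem, rfl⟩⟩
        · by_cases he : e = e₀
          · subst he
            exact ⟨m₀, Set.mem_insert _ _, by rw [hm₀def]; exact Sym2.mem_mk_right _ _⟩
          · obtain ⟨e', he'⟩ := hunlift e he
            obtain ⟨q, hq, hmem⟩ := hQ.2.2 (Sum.inr e')
            refine ⟨Sym2.map ι q, Set.mem_insert_of_mem _ ⟨q, hq, rfl⟩,
              Sym2.mem_map.mpr ⟨Sum.inr e', hmem, congrArg Sum.inr he'⟩⟩
  have hFinj : Set.InjOn (fun Q => insert m₀ (Sym2.map ι '' Q))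
      {Q | IsPerfMatchSet (middleGraph (G.induce {w | w ≠ v})) Q} := by
    intro Q₁ _ Q₂ _ h
    simp only at h
    have h1 : Sym2.map ι '' Q₁ = Sym2.map ι '' Q₂ := by
      calc Sym2.map ι '' Q₁ = (insert m₀ (Sym2.map ι '' Q₁)) \ {m₀} :=
            (Set.insert_diff_self_of_notMem (himgnotm Q₁)).symm
        _ = (insert m₀ (Sym2.map ι '' Q₂)) \ {m₀} := by rw [h]
        _ = Sym2.map ι '' Q₂ := Set.insert_diff_self_of_notMem (himgnotm Q₂)
    exact Set.image_injective.mpr himginj h1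
  rw [pmCount, pmCount, hset, Set.ncard_image_of_injOn hFinj]
end

section
/- Let G be a connected cubic (3-regular) simple graph with n vertices and m = 3n/2 edges, where m is even. Then the number of perfect matchings of the vertex-edge graph M(G) equals 2^(m-n+1) · 3^((2n-m)/2) = 2^(n/2 + 1) · 3^(n/4). -/
variable {V : Type*}

open Finset Sum

namespace MGaux

variable {W : Type*}

def IsPairing (T : Finset W) (Q : Finset (Sym2 W)) : Prop :=
  (∀ p ∈ Q, ¬ p.IsDiag) ∧
  (∀ p ∈ Q, ∀ q ∈ Q, p ≠ q → ∀ a, a ∈ p → a ∉ q) ∧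
  (∀ w, w ∈ T ↔ ∃ p ∈ Q, w ∈ p)

lemma pair_eq_out (p : Sym2 W) : p = s(p.out.1, p.out.2) := by
  conv_lhs => rw [← Quot.out_eq p]

namespace IsPairing

variable {T : Finset W} {Q : Finset (Sym2 W)}

lemma mem_of_mem_pair (h : IsPairing T Q) {p a} (hp : p ∈ Q) (ha : a ∈ p) : a ∈ T :=
  (h.2.2 a).2 ⟨p, hp, ha⟩

lemma eq_of_common (h : IsPairing T Q) {p q a} (hp : p ∈ Q) (hq : q ∈ Q)
    (hap : a ∈ p) (haq : a ∈ q) : p = q := by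
  by_contra hne
  exact h.2.1 p hp q hq hne a hap haq

lemma unique_partner (h : IsPairing T Q) {a b c} (hab : s(a, b) ∈ Q) (hac : s(a, c) ∈ Q) :
    b = c := by
  have := h.eq_of_common hab hac (Sym2.mem_mk_left a b) (Sym2.mem_mk_left a c)
  exact Sym2.congr_right.mp this

lemma exists_partner (h : IsPairing T Q) {a} (ha : a ∈ T) :
    ∃ b, b ≠ a ∧ b ∈ T ∧ s(a, b) ∈ Q := by
  obtain ⟨p, hp, hap⟩ := (h.2.2 a).1 ha
  obtain ⟨b, rfl⟩ := Sym2.mem_iff_exists.mp hap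
  refine ⟨b, ?_, h.mem_of_mem_pair hp (Sym2.mem_mk_right a b), hp⟩
  intro hba
  exact h.1 _ hp (Sym2.mk_isDiag_iff.mpr hba.symm)

lemma card_eq (h : IsPairing T Q) : T.card = 2 * Q.card := by
  classical
  have hT : T = Q.biUnion fun p => {p.out.1, p.out.2} := by
    ext w
    simp only [mem_biUnion, mem_insert, mem_singleton]
    rw [h.2.2 w]
    refine exists_congr fun p => and_congr_right fun hp => ?_
    conv_lhs => rw [pair_eq_out p]
    rw [Sym2.mem_iff]
  rw [hT, card_biUnion]
  · rw [Finset.sum_congr rfl fun p hp => ?_, Finset.sum_const, smul_eq_mul, mul_comm]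
    have hne : p.out.1 ≠ p.out.2 := by
      intro he
      exact h.1 p hp (by rw [pair_eq_out p, Sym2.mk_isDiag_iff]; exact he)
    rw [card_insert_of_notMem (by simpa using hne), card_singleton]
  · intro p hp q hq hne
    rw [Function.onFun, Finset.disjoint_left]
    intro a hap haq
    simp only [mem_insert, mem_singleton] at hap haq
    have hap' : a ∈ p := by rw [pair_eq_out p, Sym2.mem_iff]; exact hap
    have haq' : a ∈ q := by rw [pair_eq_out q, Sym2.mem_iff]; exact haq
    exact h.2.1 p hp q hq hne a hap' haq'

end IsPairing

lemma isPairing_pair [DecidableEq W] {a b : W} (hab : a ≠ b) : IsPairing {a, b} {s(a, b)} := by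
  classical
  refine ⟨?_, ?_, ?_⟩
  · intro p hp
    rw [mem_singleton] at hp
    subst hp
    exact fun hd => hab (Sym2.mk_isDiag_iff.mp hd)
  · intro p hp q hq hne
    rw [mem_singleton] at hp hq
    exact absurd (hp.trans hq.symm) hne
  · intro w
    simp [Sym2.mem_iff]

lemma card_pairings_two [DecidableEq W] {T : Finset W} (hT : T.card = 2) :
    Nat.card {Q : Finset (Sym2 W) // IsPairing T Q} = 1 := by
  obtain ⟨a, b, hab, rfl⟩ := Finset.card_eq_two.mp hT
  rw [Nat.card_eq_one_iff_unique]
  constructor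
  · constructor
    rintro ⟨Q, hQ⟩ ⟨Q', hQ'⟩
    have key : ∀ R : Finset (Sym2 W), IsPairing {a, b} R → R = {s(a, b)} := by
      intro R hR
      apply Finset.Subset.antisymm
      · intro p hp
        have h1 : p.out.1 ∈ ({a, b} : Finset W) :=
          hR.mem_of_mem_pair hp (Sym2.out_fst_mem p)
        have h2 : p.out.2 ∈ ({a, b} : Finset W) :=
          hR.mem_of_mem_pair hp (Sym2.out_snd_mem p)
        have hne : p.out.1 ≠ p.out.2 := fun he =>
          hR.1 p hp (by rw [pair_eq_out p, Sym2.mk_isDiag_iff]; exact he)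
        simp only [mem_insert, mem_singleton] at h1 h2
        rw [mem_singleton]
        conv_lhs => rw [pair_eq_out p]
        rcases h1 with h1 | h1 <;> rcases h2 with h2 | h2 <;>
          simp_all [Sym2.eq_iff] <;> tauto
      · intro p hp
        rw [mem_singleton] at hp
        subst hp
        obtain ⟨c, hca, hcT, hc⟩ := hR.exists_partner (by simp : a ∈ ({a, b} : Finset W))
        simp only [mem_insert, mem_singleton] at hcT
        rcases hcT with rfl | rfl
        · exact absurd rfl hca
        · exact hc
    exact Subtype.ext ((key Q hQ).trans (key Q' hQ').symm)
  · exact ⟨⟨{s(a, b)}, isPairing_pair hab⟩⟩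

lemma isPairing_two_pairs [DecidableEq W] {a b c d : W} (hab : a ≠ b) (hcd : c ≠ d)
    (hac : a ≠ c) (had : a ≠ d) (hbc : b ≠ c) (hbd : b ≠ d) :
    IsPairing {a, b, c, d} {s(a, b), s(c, d)} := by
  refine ⟨?_, ?_, ?_⟩
  · intro p hp
    rcases mem_insert.mp hp with rfl | hp
    · simp [Sym2.mk_isDiag_iff, hab]
    · rw [mem_singleton] at hp; subst hp; simp [Sym2.mk_isDiag_iff, hcd]
  · intro p hp q hq hne x hxp hxq
    simp only [mem_insert, mem_singleton] at hp hq
    rcases hp with rfl | rfl <;> rcases hq with rfl | rfl <;>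
      simp only [Sym2.mem_iff] at hxp hxq <;>
      first
        | exact hne rfl
        | (rcases hxp with rfl | rfl <;> rcases hxq with h | h <;> simp_all)
  · intro w
    constructor
    · intro hw
      simp only [mem_insert, mem_singleton] at hw
      rcases hw with h | h | h | h
      · exact ⟨s(a, b), by simp, by rw [h]; exact Sym2.mem_mk_left a b⟩
      · exact ⟨s(a, b), by simp, by rw [h]; exact Sym2.mem_mk_right a b⟩
      · exact ⟨s(c, d), by simp, by rw [h]; exact Sym2.mem_mk_left c d⟩
      · exact ⟨s(c, d), by simp, by rw [h]; exact Sym2.mem_mk_right c d⟩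
    · rintro ⟨p, hp, hw⟩
      simp only [mem_insert, mem_singleton] at hp
      rcases hp with rfl | rfl <;> simp only [Sym2.mem_iff] at hw <;> rcases hw with rfl | rfl <;> simp

lemma pairing_eq_of_mem [DecidableEq W] {a b c d : W} {Q} (h : IsPairing {a, b, c, d} Q)
    (hac : a ≠ c) (had : a ≠ d) (hbc : b ≠ c) (hbd : b ≠ d) (hcd : c ≠ d)
    (hQab : s(a, b) ∈ Q) : Q = {s(a, b), s(c, d)} := by
  have hcT : c ∈ ({a, b, c, d} : Finset W) := by simp
  obtain ⟨y, hyc, hyT, hy⟩ := h.exists_partner hcT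
  have hya : y ≠ a := by
    intro he
    rw [he] at hy
    have := h.eq_of_common hy hQab (Sym2.mem_mk_right c a) (Sym2.mem_mk_left a b)
    rw [Sym2.eq_iff] at this
    rcases this with ⟨h1, h2⟩ | ⟨h1, h2⟩
    · exact hac h1.symm
    · exact hbc h1.symm
  have hyb : y ≠ b := by
    intro he
    rw [he] at hy
    have := h.eq_of_common hy hQab (Sym2.mem_mk_right c b) (Sym2.mem_mk_right a b)
    rw [Sym2.eq_iff] at this
    rcases this with ⟨h1, h2⟩ | ⟨h1, h2⟩
    · exact hac h1.symm
    · exact hbc h1.symm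
  have hyd : y = d := by
    simp only [mem_insert, mem_singleton] at hyT
    tauto
  rw [hyd] at hy
  apply Finset.Subset.antisymm
  · intro p hp
    have hm : p.out.1 ∈ p := Sym2.out_fst_mem p
    have h1 := h.mem_of_mem_pair hp hm
    simp only [mem_insert, mem_singleton] at h1
    rw [mem_insert, mem_singleton]
    rcases h1 with h1 | h1 | h1 | h1
    · exact Or.inl (h.eq_of_common hp hQab (h1 ▸ hm) (Sym2.mem_mk_left a b))
    · exact Or.inl (h.eq_of_common hp hQab (h1 ▸ hm) (Sym2.mem_mk_right a b))
    · exact Or.inr (h.eq_of_common hp hy (h1 ▸ hm) (Sym2.mem_mk_left c d))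
    · exact Or.inr (h.eq_of_common hp hy (h1 ▸ hm) (Sym2.mem_mk_right c d))
  · intro p hp
    rcases mem_insert.mp hp with rfl | hp
    · exact hQab
    · rw [mem_singleton] at hp; subst hp; exact hy

lemma card_pairings_four [DecidableEq W] {T : Finset W} (hT : T.card = 4) :
    Nat.card {Q : Finset (Sym2 W) // IsPairing T Q} = 3 := by
  obtain ⟨a, ha⟩ := Finset.card_pos.mp (by omega : 0 < T.card)
  have h3 : (T.erase a).card = 3 := by rw [Finset.card_erase_of_mem ha, hT]
  obtain ⟨b, c, d, hbc, hbd, hcd, hbcd⟩ := Finset.card_eq_three.mp h3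
  have hab : a ≠ b := fun h => Finset.notMem_erase a T (by rw [hbcd, h]; simp)
  have hac : a ≠ c := fun h => Finset.notMem_erase a T (by rw [hbcd, h]; simp)
  have had : a ≠ d := fun h => Finset.notMem_erase a T (by rw [hbcd, h]; simp)
  have hTe : T = {a, b, c, d} := by
    rw [← Finset.insert_erase ha, hbcd]
  subst hTe
  have perm2 : ({a, b, c, d} : Finset W) = {a, c, b, d} := by
    ext x; simp only [mem_insert, mem_singleton]; tauto
  have perm3 : ({a, b, c, d} : Finset W) = {a, d, b, c} := by
    ext x; simp only [mem_insert, mem_singleton]; tauto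
  have hS : {Q : Finset (Sym2 W) | IsPairing {a, b, c, d} Q} =
      ↑({{s(a, b), s(c, d)}, {s(a, c), s(b, d)}, {s(a, d), s(b, c)}} :
        Finset (Finset (Sym2 W))) := by
    ext Q
    simp only [Set.mem_setOf_eq, Finset.coe_insert, Set.mem_insert_iff, Finset.coe_singleton,
      Set.mem_singleton_iff]
    constructor
    · intro h
      obtain ⟨x, hxa, hxT, hx⟩ := h.exists_partner (by simp : a ∈ ({a, b, c, d} : Finset W))
      have hx' : s(a, x) ∈ Q := Sym2.eq_swap ▸ hx
      simp only [mem_insert, mem_singleton] at hxT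
      rcases hxT with he | he | he | he
      · exact absurd he hxa
      · rw [he] at hx'
        exact Or.inl (pairing_eq_of_mem h hac had hbc hbd hcd hx')
      · rw [he] at hx'
        have h2 : IsPairing {a, c, b, d} Q := by rwa [← perm2]
        exact Or.inr (Or.inl (pairing_eq_of_mem h2 hab had hbc.symm hcd hbd hx'))
      · rw [he] at hx'
        have h3 : IsPairing {a, d, b, c} Q := by rwa [← perm3]
        exact Or.inr (Or.inr (pairing_eq_of_mem h3 hab hac hbd.symm hcd.symm hbc hx'))
    · rintro (rfl | rfl | rfl)
      · exact isPairing_two_pairs hab hcd hac had hbc hbd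
      · rw [perm2]; exact isPairing_two_pairs hac hbd hab had hbc.symm hcd
      · rw [perm3]; exact isPairing_two_pairs had hbc hab hac hbd.symm hcd.symm
  have : Nat.card {Q : Finset (Sym2 W) // IsPairing {a, b, c, d} Q} =
      ({Q : Finset (Sym2 W) | IsPairing {a, b, c, d} Q}).ncard := by
    rw [← Nat.card_coe_set_eq]
    rfl
  rw [this, hS, Set.ncard_coe_finset]
  have d1 : ({s(a, b), s(c, d)} : Finset (Sym2 W)) ≠ {s(a, c), s(b, d)} := by
    intro h
    have : s(a, b) ∈ ({s(a, c), s(b, d)} : Finset (Sym2 W)) := h ▸ by simp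
    simp only [mem_insert, mem_singleton, Sym2.eq_iff] at this
    tauto
  have d2 : ({s(a, b), s(c, d)} : Finset (Sym2 W)) ≠ {s(a, d), s(b, c)} := by
    intro h
    have : s(a, b) ∈ ({s(a, d), s(b, c)} : Finset (Sym2 W)) := h ▸ by simp
    simp only [mem_insert, mem_singleton, Sym2.eq_iff] at this
    tauto
  have d3 : ({s(a, c), s(b, d)} : Finset (Sym2 W)) ≠ {s(a, d), s(b, c)} := by
    intro h
    have : s(a, c) ∈ ({s(a, d), s(b, c)} : Finset (Sym2 W)) := h ▸ by simp
    simp only [mem_insert, mem_singleton, Sym2.eq_iff] at this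
    tauto
  rw [Finset.card_insert_of_notMem (by simp [d1, d2]),
    Finset.card_insert_of_notMem (by simp [d3]), Finset.card_singleton]



lemma z2_add_self' : ∀ a : ZMod 2, a + a = 0 := by decide
lemma z2_add_self (a : ZMod 2) : a + a = 0 := z2_add_self' a
lemma z2_ne_zero' : ∀ a : ZMod 2, a ≠ 0 → a = 1 := by decide
lemma z2_ne_zero {a : ZMod 2} (h : a ≠ 0) : a = 1 := z2_ne_zero' a h
lemma z2_abc' : ∀ a b c : ZMod 2, a + b + (b + c) = a + c := by decide
lemma z2_abc (a b c : ZMod 2) : a + b + (b + c) = a + c := z2_abc' a b c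

variable {V : Type*} [Fintype V] [DecidableEq V] (G : SimpleGraph V) [DecidableRel G.Adj]

/-- boundary map over GF(2) -/
def bnd : (G.edgeSet → ZMod 2) →+ (V → ZMod 2) where
  toFun x v := ∑ e : G.edgeSet, if v ∈ (e : Sym2 V) then x e else 0
  map_zero' := by funext v; simp
  map_add' x y := by
    funext v
    rw [Pi.add_apply, ← Finset.sum_add_distrib]
    refine Finset.sum_congr rfl fun e _ => ?_
    split <;> simp

def sumHom (V : Type*) [Fintype V] : (V → ZMod 2) →+ ZMod 2 where
  toFun y := ∑ v, y v
  map_zero' := by simp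
  map_add' x y := by rw [← Finset.sum_add_distrib]; rfl

def sgl (u : V) : V → ZMod 2 := fun w => if w = u then 1 else 0

variable {G}

lemma card_endpoints (e : G.edgeSet) :
    (univ.filter fun v => v ∈ (e : Sym2 V)).card = 2 := by
  obtain ⟨e, he⟩ := e
  induction e with
  | _ a b =>
    have hab : a ≠ b := G.ne_of_adj ((SimpleGraph.mem_edgeSet G).mp he)
    have : (univ.filter fun v => v ∈ s(a, b)) = {a, b} := by
      ext v; simp [Sym2.mem_iff]
    rw [this, Finset.card_pair hab]

lemma sumHom_bnd (x : G.edgeSet → ZMod 2) : sumHom V (bnd G x) = 0 := by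
  show ∑ v, ∑ e : G.edgeSet, (if v ∈ (e : Sym2 V) then x e else 0) = 0
  rw [Finset.sum_comm]
  refine Finset.sum_eq_zero fun e _ => ?_
  rw [← Finset.sum_filter, Finset.sum_const, card_endpoints e, two_smul, z2_add_self]

lemma sumHom_sgl (u : V) : sumHom V (sgl u : V → ZMod 2) = 1 := by
  show (∑ v, if v = u then (1 : ZMod 2) else 0) = 1
  simp

lemma adj_mem_range {u w : V} (h : G.Adj u w) : sgl u + sgl w ∈ (bnd G).range := by
  classical
  refine ⟨fun e => if (e : Sym2 V) = s(u, w) then 1 else 0, ?_⟩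
  set e₀ : G.edgeSet := ⟨s(u, w), (SimpleGraph.mem_edgeSet G).mpr h⟩ with he₀
  funext v
  show (∑ e : G.edgeSet, if v ∈ (e : Sym2 V) then (if (e : Sym2 V) = s(u, w) then (1 : ZMod 2) else 0) else 0) = _
  have step : ∀ e : G.edgeSet,
      (if v ∈ (e : Sym2 V) then (if (e : Sym2 V) = s(u, w) then (1 : ZMod 2) else 0) else 0) =
      if e = e₀ then (if v ∈ s(u, w) then (1 : ZMod 2) else 0) else 0 := by
    intro e
    by_cases he : e = e₀
    · subst he
      have : (e₀ : Sym2 V) = s(u, w) := rfl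
      rw [this]
      simp
    · have hne : (e : Sym2 V) ≠ s(u, w) := fun hc => he (Subtype.ext hc)
      simp [hne, he]
  rw [Finset.sum_congr rfl fun e _ => step e, Finset.sum_ite_eq' univ e₀]
  have hne := G.ne_of_adj h
  by_cases h1 : v = u <;> by_cases h2 : v = w <;>
    simp_all [sgl, Sym2.mem_iff, Pi.add_apply]

lemma reachable_mem_range {u w : V} (h : G.Reachable u w) :
    sgl u + sgl w ∈ (bnd G).range := by
  obtain ⟨p⟩ := h
  induction p with
  | nil =>
    have h0 : ∀ t : V, sgl t + sgl t = (0 : V → ZMod 2) := fun t => funext fun z => z2_add_self _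
    rw [h0]; exact zero_mem _
  | @cons u x w h p ih =>
    have := add_mem (adj_mem_range h) ih
    have he : (sgl u + sgl x) + (sgl x + sgl w) = sgl u + sgl w := by
      funext z; exact z2_abc _ _ _
    rwa [he] at this

lemma range_bnd_eq (hconn : G.Connected) : (bnd G).range = (sumHom V).ker := by
  apply le_antisymm
  · rintro y ⟨x, rfl⟩
    exact AddMonoidHom.mem_ker.mpr (sumHom_bnd x)
  · intro y hy
    have hy0 : (∑ v, y v) = 0 := hy
    haveI : Nonempty V := hconn.nonempty
    set u₀ : V := Classical.arbitrary V
    classical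
    set supp : Finset V := univ.filter fun v => y v ≠ 0 with hsupp
    have hone : ∀ v ∈ supp, y v = 1 := fun v hv => z2_ne_zero (by simpa [hsupp] using (mem_filter.mp hv).2)
    have hcard : ((supp.card : ℕ) : ZMod 2) = 0 := by
      have : (∑ v, y v) = ∑ v ∈ supp, y v := by
        rw [hsupp, Finset.sum_filter_ne_zero]
      rw [this] at hy0
      rw [Finset.sum_congr rfl hone] at hy0
      simpa using hy0
    have key : y = ∑ v ∈ supp, (sgl v + sgl u₀) := by
      rw [Finset.sum_add_distrib, Finset.sum_const]
      have h1 : supp.card • sgl u₀ = 0 := by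
        funext z
        rw [Pi.smul_apply, nsmul_eq_mul]
        simp [hcard]
      rw [h1, add_zero]
      funext z
      rw [Finset.sum_apply]
      have : (∑ v ∈ supp, sgl v z) = ∑ v ∈ supp, if z = v then (1 : ZMod 2) else 0 := rfl
      rw [this, Finset.sum_ite_eq supp z]
      by_cases hz : z ∈ supp
      · rw [if_pos hz, hone z hz]
      · rw [if_neg hz]
        by_contra hzz
        exact hz (mem_filter.mpr ⟨mem_univ z, fun h0 => hzz (by rw [h0])⟩)
    rw [key]
    exact sum_mem fun v _ => reachable_mem_range (hconn.preconnected v u₀)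


section Count
variable {V : Type*} [Fintype V] [DecidableEq V] {G : SimpleGraph V} [DecidableRel G.Adj]

lemma nat_card_solution (hconn : G.Connected) {c : V → ZMod 2} (hc : sumHom V c = 0)
    (hn : 1 ≤ Fintype.card V) (hm : Fintype.card V ≤ G.edgeFinset.card) :
    Nat.card {x : G.edgeSet → ZMod 2 // bnd G x = c} =
      2 ^ (G.edgeFinset.card - Fintype.card V + 1) := by
  classical
  haveI : Nonempty V := hconn.nonempty
  set n := Fintype.card V with hnn
  set m := G.edgeFinset.card with hmm
  have hcardE : Nat.card (G.edgeSet → ZMod 2) = 2 ^ m := by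
    rw [Nat.card_fun, Nat.card_zmod, Nat.card_eq_fintype_card, hmm,
      SimpleGraph.edgeFinset, Set.toFinset_card]
  have hcardV : Nat.card (V → ZMod 2) = 2 ^ n := by
    rw [Nat.card_fun, Nat.card_zmod, Nat.card_eq_fintype_card]
  -- sumHom is surjective
  have hsurj : Function.Surjective (sumHom V) := by
    intro z
    by_cases hz : z = 0
    · exact ⟨0, by rw [map_zero, hz]⟩
    · exact ⟨sgl (Classical.arbitrary V), by rw [sumHom_sgl, z2_ne_zero hz]⟩
  have hK1 : Nat.card (sumHom V).ker = 2 ^ (n - 1) := by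
    have h1 := AddSubgroup.card_eq_card_quotient_mul_card_addSubgroup (sumHom V).ker
    have h2 : Nat.card ((V → ZMod 2) ⧸ (sumHom V).ker) = 2 := by
      rw [Nat.card_congr (QuotientAddGroup.quotientKerEquivRange (sumHom V)).toEquiv,
        AddMonoidHom.range_eq_top.mpr hsurj,
        Nat.card_congr AddSubgroup.topEquiv.toEquiv, Nat.card_zmod]
    rw [hcardV, h2] at h1
    have h3 : 2 ^ n = 2 * 2 ^ (n - 1) := by
      rw [← pow_succ']
      congr 1
      omega
    omega
  have hK2 : Nat.card (bnd G).ker = 2 ^ (m - n + 1) := by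
    have h1 := AddSubgroup.card_eq_card_quotient_mul_card_addSubgroup (bnd G).ker
    have h2 : Nat.card ((G.edgeSet → ZMod 2) ⧸ (bnd G).ker) = 2 ^ (n - 1) := by
      rw [Nat.card_congr (QuotientAddGroup.quotientKerEquivRange (bnd G)).toEquiv,
        range_bnd_eq hconn, hK1]
    rw [hcardE, h2] at h1
    have h3 : 2 ^ m = 2 ^ (n - 1) * 2 ^ (m - n + 1) := by
      rw [← pow_add]
      congr 1
      omega
    have h4 : 0 < 2 ^ (n - 1) := Nat.pow_pos (by norm_num)
    rw [h3] at h1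
    exact (Nat.eq_of_mul_eq_mul_left h4 h1.symm)
  -- c is in the range
  have hcr : c ∈ (bnd G).range := by
    rw [range_bnd_eq hconn]
    exact AddMonoidHom.mem_ker.mpr hc
  obtain ⟨x₀, hx₀⟩ := hcr
  have hself : ∀ z : G.edgeSet → ZMod 2, z + z = 0 := fun z => funext fun w => z2_add_self _
  have hEquiv : {x : G.edgeSet → ZMod 2 // bnd G x = c} ≃ (bnd G).ker :=
    { toFun := fun x => ⟨x.1 + x₀, by
        rw [AddMonoidHom.mem_ker, map_add, x.2, hx₀]
        exact funext fun w => z2_add_self _⟩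
      invFun := fun y => ⟨y.1 + x₀, by
        rw [map_add, AddMonoidHom.mem_ker.mp y.2, hx₀, zero_add]⟩
      left_inv := fun x => Subtype.ext (by
        show x.1 + x₀ + x₀ = x.1
        rw [add_assoc, hself, add_zero])
      right_inv := fun y => Subtype.ext (by
        show y.1 + x₀ + x₀ = y.1
        rw [add_assoc, hself, add_zero]) }
  rw [Nat.card_congr hEquiv, hK2]

end Count

section Orient
variable {V : Type*} [Fintype V] [DecidableEq V] {G : SimpleGraph V} [DecidableRel G.Adj]

lemma bnd_apply (x : G.edgeSet → ZMod 2) (v : V) :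
    bnd G x v = ∑ e : G.edgeSet, if v ∈ (e : Sym2 V) then x e else 0 := rfl

lemma sumHom_apply (y : V → ZMod 2) : sumHom V y = ∑ v, y v := rfl

lemma z2_odd_iff (k : ℕ) : Odd k ↔ (k : ZMod 2) = 1 := by
  rw [← ZMod.natCast_mod k 2, Nat.odd_iff]
  constructor
  · intro h; rw [h]; exact Nat.cast_one
  · intro h
    rcases Nat.mod_two_eq_zero_or_one k with h0 | h0
    · rw [h0] at h; exact absurd h (by decide)
    · exact h0

lemma z2_even_iff (k : ℕ) : Even k ↔ (k : ZMod 2) = 0 := by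
  rw [← ZMod.natCast_mod k 2, Nat.even_iff]
  constructor
  · intro h; rw [h]; exact Nat.cast_zero
  · intro h
    rcases Nat.mod_two_eq_zero_or_one k with h0 | h0
    · exact h0
    · rw [h0] at h; exact absurd h (by decide)

variable (G) in
def degFn (σ : G.edgeSet → V) (v : V) : ℕ := (univ.filter fun e => σ e = v).card

noncomputable def out1 (e : G.edgeSet) : V := (e : Sym2 V).out.1
noncomputable def out2 (e : G.edgeSet) : V := (e : Sym2 V).out.2

lemma out1_ne_out2 (e : G.edgeSet) : out1 e ≠ out2 e := by
  intro h
  have hd := G.not_isDiag_of_mem_edgeSet e.2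
  rw [pair_eq_out (e : Sym2 V)] at hd
  exact hd (Sym2.mk_isDiag_iff.mpr h)

lemma mem_out (e : G.edgeSet) {v : V} (hv : v ∈ (e : Sym2 V)) : v = out1 e ∨ v = out2 e := by
  rw [pair_eq_out (e : Sym2 V)] at hv
  exact Sym2.mem_iff.mp hv

lemma out1_mem (e : G.edgeSet) : out1 e ∈ (e : Sym2 V) := Sym2.out_fst_mem _
lemma out2_mem (e : G.edgeSet) : out2 e ∈ (e : Sym2 V) := Sym2.out_snd_mem _

variable (G) in
noncomputable def sigOf (x : G.edgeSet → ZMod 2) : G.edgeSet → V := fun e => if x e = 0 then out1 e else out2 e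

variable (G) in
noncomputable def xOf (σ : G.edgeSet → V) : G.edgeSet → ZMod 2 := fun e => if σ e = out1 e then 0 else 1

variable (G) in
noncomputable def sig0 : G.edgeSet → V := fun e => out1 e

variable (G) in
noncomputable def cTarget : V → ZMod 2 := fun v => 1 + (degFn G (sig0 G) v : ZMod 2)

lemma sigOf_mem (x : G.edgeSet → ZMod 2) (e : G.edgeSet) : sigOf G x e ∈ (e : Sym2 V) := by
  unfold sigOf; split
  · exact out1_mem e
  · exact out2_mem e

lemma xOf_sigOf (x : G.edgeSet → ZMod 2) : xOf G (sigOf G x) = x := by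
  funext e
  unfold xOf sigOf
  by_cases hx : x e = 0
  · simp [hx]
  · rw [if_neg hx, if_neg (out1_ne_out2 e).symm, (z2_ne_zero hx)]

lemma sigOf_xOf {σ : G.edgeSet → V} (hσ : ∀ e : G.edgeSet, σ e ∈ (e : Sym2 V)) : sigOf G (xOf G σ) = σ := by
  funext e
  unfold sigOf xOf
  by_cases h1 : σ e = out1 e
  · rw [if_pos h1, if_pos rfl, h1]
  · rw [if_neg h1, if_neg one_ne_zero]
    rcases mem_out e (hσ e) with h | h
    · exact absurd h h1
    · exact h.symm

lemma cast_degFn (σ : G.edgeSet → V) (v : V) :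
    ((degFn G σ v : ℕ) : ZMod 2) = ∑ e : G.edgeSet, if σ e = v then (1 : ZMod 2) else 0 := by
  unfold degFn
  rw [Finset.card_filter]
  push_cast
  rfl

lemma parity_key (x : G.edgeSet → ZMod 2) (v : V) :
    ((degFn G (sigOf G x) v : ℕ) : ZMod 2) =
      ((degFn G (sig0 G) v : ℕ) : ZMod 2) + bnd G x v := by
  rw [cast_degFn, cast_degFn, bnd_apply, ← Finset.sum_add_distrib]
  refine Finset.sum_congr rfl fun e _ => ?_
  have hne := out1_ne_out2 e
  have hmem : ∀ w : V, w ∈ (e : Sym2 V) ↔ w = out1 e ∨ w = out2 e := by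
    intro w
    constructor
    · exact mem_out e
    · rintro (rfl | rfl); exacts [out1_mem e, out2_mem e]
  unfold sigOf sig0
  by_cases hx : x e = 0
  · rw [if_pos hx, hx]
    by_cases hv : v ∈ (e : Sym2 V) <;> simp [hv]
  · have hx1 : x e = 1 := z2_ne_zero hx
    rw [if_neg hx, hx1]
    by_cases h1 : out1 e = v
    · have h2 : out2 e ≠ v := fun h => hne (h1.trans h.symm)
      have hv : v ∈ (e : Sym2 V) := (hmem v).mpr (Or.inl h1.symm)
      rw [if_neg h2, if_pos h1, if_pos hv]
      decide
    · by_cases h2 : out2 e = v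
      · have hv : v ∈ (e : Sym2 V) := (hmem v).mpr (Or.inr h2.symm)
        rw [if_pos h2, if_neg h1, if_pos hv]
        decide
      · have hv : ¬ v ∈ (e : Sym2 V) := by
          rw [hmem v]
          push_neg
          exact ⟨fun h => h1 h.symm, fun h => h2 h.symm⟩
        rw [if_neg h2, if_neg h1, if_neg hv]
        decide

lemma oddAll_iff (x : G.edgeSet → ZMod 2) :
    (∀ v, Odd (degFn G (sigOf G x) v)) ↔ bnd G x = cTarget G := by
  rw [funext_iff]
  refine forall_congr' fun v => ?_
  rw [z2_odd_iff, parity_key]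
  unfold cTarget
  generalize ((degFn G (sig0 G) v : ℕ) : ZMod 2) = p
  generalize bnd G x v = t
  revert p t
  decide

lemma sum_degFn (σ : G.edgeSet → V) :
    ∑ v, degFn G σ v = (univ : Finset G.edgeSet).card := by
  unfold degFn
  exact (Finset.card_eq_sum_card_fiberwise (fun e _ => mem_univ (σ e))).symm

lemma sum_cTarget (hn : Even (Fintype.card V)) (hm : Even G.edgeFinset.card) :
    sumHom V (cTarget G) = 0 := by
  rw [sumHom_apply]
  unfold cTarget
  rw [Finset.sum_add_distrib, Finset.sum_const, Finset.card_univ, ← Nat.cast_sum, sum_degFn]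
  have h1 : ((univ : Finset G.edgeSet).card : ZMod 2) = 0 := by
    rw [← z2_even_iff]
    have : (univ : Finset G.edgeSet).card = G.edgeFinset.card := by
      rw [SimpleGraph.edgeFinset, Set.toFinset_card, Finset.card_univ]
    rw [this]; exact hm
  have h2 : ((Fintype.card V : ℕ) : ZMod 2) = 0 := (z2_even_iff _).mp hn
  rw [h1, add_zero, nsmul_eq_mul, mul_one, h2]

lemma card_oddOrient (hconn : G.Connected)
    (hn : 1 ≤ Fintype.card V) (hm : Fintype.card V ≤ G.edgeFinset.card)
    (hnE : Even (Fintype.card V)) (hmE : Even G.edgeFinset.card) :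
    Nat.card {σ : G.edgeSet → V // (∀ e : G.edgeSet, σ e ∈ (e : Sym2 V)) ∧ ∀ v, Odd (degFn G σ v)} =
      2 ^ (G.edgeFinset.card - Fintype.card V + 1) := by
  rw [← nat_card_solution hconn (sum_cTarget hnE hmE) hn hm]
  refine Nat.card_congr ?_
  exact
    { toFun := fun σ => ⟨xOf G σ.1, by
        have := (oddAll_iff (G := G) (xOf G σ.1))
        rw [sigOf_xOf σ.2.1] at this
        exact this.mp σ.2.2⟩
      invFun := fun x => ⟨sigOf G x.1, fun e : G.edgeSet => sigOf_mem x.1 e, (oddAll_iff x.1).mpr x.2⟩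
      left_inv := fun σ => Subtype.ext (sigOf_xOf σ.2.1)
      right_inv := fun x => Subtype.ext (xOf_sigOf x.1) }

end Orient
section Grand
variable {V : Type*} [Fintype V] [DecidableEq V] {G : SimpleGraph V} [DecidableRel G.Adj]


-- adjacency lemmas
lemma mg_adj_lr {u : V} {e : G.edgeSet} :
    (middleGraph G).Adj (inl u) (inr e) ↔ u ∈ (e : Sym2 V) := Iff.rfl
lemma mg_adj_rl {u : V} {e : G.edgeSet} :
    (middleGraph G).Adj (inr e) (inl u) ↔ u ∈ (e : Sym2 V) := Iff.rfl
lemma mg_adj_rr {e f : G.edgeSet} :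
    (middleGraph G).Adj (inr e) (inr f) ↔
      e ≠ f ∧ ∃ v, v ∈ (e : Sym2 V) ∧ v ∈ (f : Sym2 V) := Iff.rfl
lemma mg_adj_ll {u v : V} : ¬ (middleGraph G).Adj (inl u) (inl v) := fun h => h

variable (G) in
def Tset (σ : G.edgeSet → V) (v : V) : Finset (V ⊕ G.edgeSet) :=
  insert (inl v) ((univ.filter fun e => σ e = v).image inr)

lemma mem_Tset {σ : G.edgeSet → V} {v : V} {w : V ⊕ G.edgeSet} :
    w ∈ Tset G σ v ↔ w = inl v ∨ ∃ e : G.edgeSet, σ e = v ∧ w = inr e := by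
  unfold Tset
  simp only [mem_insert, mem_image, mem_filter, mem_univ, true_and]
  constructor
  · rintro (h | ⟨e, he, rfl⟩)
    · exact Or.inl h
    · exact Or.inr ⟨e, he, rfl⟩
  · rintro (h | ⟨e, he, rfl⟩)
    · exact Or.inl h
    · exact Or.inr ⟨e, he, rfl⟩

lemma card_Tset (σ : G.edgeSet → V) (v : V) :
    (Tset G σ v).card = degFn G σ v + 1 := by
  unfold Tset degFn
  rw [card_insert_of_notMem, card_image_of_injective _ inr_injective]
  simp only [mem_image]
  rintro ⟨e, -, he⟩
  exact absurd he (by simp)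

variable (G) in
def Ctr (P : Set (Sym2 (V ⊕ G.edgeSet))) (e : G.edgeSet) (v : V) : Prop :=
  ∃ x, s(Sum.inr e, x) ∈ P ∧
    (x = Sum.inl v ∨ ∃ f : G.edgeSet, x = Sum.inr f ∧ v ∈ (e : Sym2 V) ∧ v ∈ (f : Sym2 V))

section withP
variable {P : Set (Sym2 (V ⊕ G.edgeSet))}

lemma pair_unique (hP : IsPerfMatchSet (middleGraph G) P) {p q a} (hp : p ∈ P) (hq : q ∈ P) (hap : a ∈ p) (haq : a ∈ q) : p = q := by
  by_contra hne
  exact hP.2.1 p hp q hq hne a hap haq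

lemma common_unique {e f : G.edgeSet} (hef : e ≠ f) {v v' : V}
    (hv : v ∈ (e : Sym2 V)) (hv2 : v ∈ (f : Sym2 V))
    (hv' : v' ∈ (e : Sym2 V)) (hv2' : v' ∈ (f : Sym2 V)) : v = v' := by
  by_contra hne
  have h1 : (e : Sym2 V) = s(v, v') := (Sym2.mem_and_mem_iff hne).mp ⟨hv, hv'⟩
  have h2 : (f : Sym2 V) = s(v, v') := (Sym2.mem_and_mem_iff hne).mp ⟨hv2, hv2'⟩
  exact hef (Subtype.ext (h1.trans h2.symm))

lemma ctr_exists (hP : IsPerfMatchSet (middleGraph G) P) (e : G.edgeSet) : ∃ v, Ctr G P e v := by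
  obtain ⟨p, hp, hep⟩ := hP.2.2 (inr e)
  obtain ⟨x, rfl⟩ := Sym2.mem_iff_exists.mp hep
  have hadj : (middleGraph G).Adj (inr e) x := (SimpleGraph.mem_edgeSet (middleGraph G)).mp (hP.1 hp)
  cases x with
  | inl u => exact ⟨u, inl u, hp, Or.inl rfl⟩
  | inr f =>
    obtain ⟨hef, v, hv⟩ := mg_adj_rr.mp hadj
    exact ⟨v, inr f, hp, Or.inr ⟨f, rfl, hv⟩⟩

lemma ctr_unique (hP : IsPerfMatchSet (middleGraph G) P) {e : G.edgeSet} {v v' : V} (h : Ctr G P e v) (h' : Ctr G P e v') : v = v' := by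
  obtain ⟨x, hx, hc⟩ := h
  obtain ⟨x', hx', hc'⟩ := h'
  have hpq : s(inr e, x) = s(inr e, x') :=
    pair_unique hP hx hx' (Sym2.mem_mk_left _ _) (Sym2.mem_mk_left _ _)
  have hxx : x = x' := Sym2.congr_right.mp hpq
  subst hxx
  rcases hc with rfl | ⟨f, rfl, hv1, hv2⟩
  · rcases hc' with h1 | ⟨f, hf, -⟩
    · exact inl_injective h1
    · exact absurd hf (by simp)
  · rcases hc' with h1 | ⟨f', hf', hv1', hv2'⟩
    · exact absurd h1 (by simp)
    · have hff : f = f' := inr_injective hf'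
      subst hff
      have hef : e ≠ f := (mg_adj_rr.mp ((SimpleGraph.mem_edgeSet (middleGraph G)).mp (hP.1 hx))).1
      exact common_unique hef hv1 hv2 hv1' hv2'

noncomputable def ctrFn (P : Set (Sym2 (V ⊕ G.edgeSet)))
    (hP : IsPerfMatchSet (middleGraph G) P) : G.edgeSet → V :=
  fun e => Classical.choose (ctr_exists hP e)

lemma ctrFn_spec (hP : IsPerfMatchSet (middleGraph G) P) (e : G.edgeSet) :
    Ctr G P e (ctrFn P hP e) := Classical.choose_spec (ctr_exists hP e)

lemma ctrFn_eq (hP : IsPerfMatchSet (middleGraph G) P) {e : G.edgeSet} {v : V}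
    (h : Ctr G P e v) : ctrFn P hP e = v :=
  ctr_unique hP (ctrFn_spec hP e) h

lemma ctrFn_mem (hP : IsPerfMatchSet (middleGraph G) P) (e : G.edgeSet) : ctrFn P hP e ∈ (e : Sym2 V) := by
  obtain ⟨x, hx, hc⟩ := ctrFn_spec hP e
  rcases hc with rfl | ⟨f, rfl, hv1, hv2⟩
  · exact mg_adj_rl.mp ((SimpleGraph.mem_edgeSet (middleGraph G)).mp (hP.1 hx))
  · exact hv1

noncomputable def Qv (P : Set (Sym2 (V ⊕ G.edgeSet))) (σ : G.edgeSet → V) (v : V) : Finset (Sym2 (V ⊕ G.edgeSet)) := by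
  classical
  exact (Set.toFinite P).toFinset.filter
    (fun p => inl v ∈ p ∨ ∃ e : G.edgeSet, inr e ∈ p ∧ σ e = v)

lemma mem_Qv {σ : G.edgeSet → V} {v : V} {p} :
    p ∈ Qv P σ v ↔ p ∈ P ∧ (inl v ∈ p ∨ ∃ e : G.edgeSet, inr e ∈ p ∧ σ e = v) := by
  unfold Qv
  classical
  rw [Finset.mem_filter, Set.Finite.mem_toFinset]

lemma mem_Tset_of_pair (hP : IsPerfMatchSet (middleGraph G) P) {p : Sym2 (V ⊕ G.edgeSet)} {v : V} (hp : p ∈ P)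
    (hc : inl v ∈ p ∨ ∃ e : G.edgeSet, inr e ∈ p ∧ ctrFn P hP e = v) :
    ∀ w ∈ p, w ∈ Tset G (ctrFn P hP) v := by
  rcases hc with hlv | ⟨e, he, hev⟩
  · obtain ⟨x, rfl⟩ := Sym2.mem_iff_exists.mp hlv
    cases x with
    | inl u => exact absurd ((SimpleGraph.mem_edgeSet (middleGraph G)).mp (hP.1 hp)) mg_adj_ll
    | inr e =>
      have hctr : Ctr G P e v := ⟨inl v, by rwa [Sym2.eq_swap], Or.inl rfl⟩
      have hσ : ctrFn P hP e = v := ctrFn_eq hP hctr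
      intro w hw
      rcases Sym2.mem_iff.mp hw with rfl | rfl
      · exact mem_Tset.mpr (Or.inl rfl)
      · exact mem_Tset.mpr (Or.inr ⟨e, hσ, rfl⟩)
  · obtain ⟨x, rfl⟩ := Sym2.mem_iff_exists.mp he
    cases x with
    | inl u =>
      have hctr : Ctr G P e u := ⟨inl u, hp, Or.inl rfl⟩
      have huv : u = v := (ctrFn_eq hP hctr).symm.trans hev
      subst huv
      intro w hw
      rcases Sym2.mem_iff.mp hw with rfl | rfl
      · exact mem_Tset.mpr (Or.inr ⟨e, hev, rfl⟩)
      · exact mem_Tset.mpr (Or.inl rfl)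
    | inr f =>
      -- identify the witness pair of ctr for e with this pair
      obtain ⟨x₀, hx₀, hc₀⟩ := ctrFn_spec hP e
      have hpq : s(inr e, x₀) = s(inr e, inr f) :=
        pair_unique hP hx₀ hp (Sym2.mem_mk_left _ _) (Sym2.mem_mk_left _ _)
      have hxx : x₀ = inr f := Sym2.congr_right.mp hpq
      subst hxx
      rcases hc₀ with h1 | ⟨f', hf', hv1, hv2⟩
      · exact absurd h1 (by simp)
      · cases inr_injective hf'
        have hvf : v ∈ (f : Sym2 V) := hev ▸ hv2
        have hve : v ∈ (e : Sym2 V) := hev ▸ hv1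
        have hctrf : Ctr G P f v := ⟨inr e, by rwa [Sym2.eq_swap], Or.inr ⟨e, rfl, hvf, hve⟩⟩
        have hσf : ctrFn P hP f = v := ctrFn_eq hP hctrf
        intro w hw
        rcases Sym2.mem_iff.mp hw with rfl | rfl
        · exact mem_Tset.mpr (Or.inr ⟨e, hev, rfl⟩)
        · exact mem_Tset.mpr (Or.inr ⟨f, hσf, rfl⟩)

lemma isPairing_Qv (hP : IsPerfMatchSet (middleGraph G) P) (v : V) :
    IsPairing (Tset G (ctrFn P hP) v) (Qv P (ctrFn P hP) v) := by
  refine ⟨?_, ?_, ?_⟩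
  · intro p hp
    exact SimpleGraph.not_isDiag_of_mem_edgeSet _ (hP.1 (mem_Qv.mp hp).1)
  · intro p hp q hq hne
    exact hP.2.1 p (mem_Qv.mp hp).1 q (mem_Qv.mp hq).1 hne
  · intro w
    constructor
    · intro hw
      rcases mem_Tset.mp hw with rfl | ⟨e, he, rfl⟩
      · obtain ⟨p, hp, hwp⟩ := hP.2.2 (inl v)
        exact ⟨p, mem_Qv.mpr ⟨hp, Or.inl hwp⟩, hwp⟩
      · obtain ⟨p, hp, hwp⟩ := hP.2.2 (inr e)
        exact ⟨p, mem_Qv.mpr ⟨hp, Or.inr ⟨e, hwp, he⟩⟩, hwp⟩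
    · rintro ⟨p, hp, hwp⟩
      obtain ⟨hpP, hc⟩ := mem_Qv.mp hp
      exact mem_Tset_of_pair hP hpP hc w hwp

lemma odd_degFn (hP : IsPerfMatchSet (middleGraph G) P) (v : V) :
    Odd (degFn G (ctrFn P hP) v) := by
  have h1 := (isPairing_Qv hP v).card_eq
  rw [card_Tset] at h1
  exact ⟨(Qv P (ctrFn P hP) v).card - 1, by omega⟩

end withP

variable (G) in
def Pun (Qf : V → Finset (Sym2 (V ⊕ G.edgeSet))) : Set (Sym2 (V ⊕ G.edgeSet)) :=
  {p | ∃ v, p ∈ Qf v}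

lemma isPM_Pun {σ : G.edgeSet → V} {Qf : V → Finset (Sym2 (V ⊕ G.edgeSet))}
    (hσ : ∀ e : G.edgeSet, σ e ∈ (e : Sym2 V))
    (hQ : ∀ v, IsPairing (Tset G σ v) (Qf v)) :
    IsPerfMatchSet (middleGraph G) (Pun G Qf) := by
  have rep : ∀ v, ∀ p ∈ Qf v, ∃ x y, p = s(x, y) ∧ x ≠ y ∧
      x ∈ Tset G σ v ∧ y ∈ Tset G σ v := by
    intro v p hp
    refine ⟨p.out.1, p.out.2, pair_eq_out p, ?_, ?_, ?_⟩
    · intro h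
      exact (hQ v).1 p hp (by rw [pair_eq_out p, Sym2.mk_isDiag_iff]; exact h)
    · exact (hQ v).mem_of_mem_pair hp (Sym2.out_fst_mem p)
    · exact (hQ v).mem_of_mem_pair hp (Sym2.out_snd_mem p)
  refine ⟨?_, ?_, ?_⟩
  · rintro p ⟨v, hp⟩
    obtain ⟨x, y, rfl, hxy, hx, hy⟩ := rep v p hp
    rw [SimpleGraph.mem_edgeSet]
    rcases mem_Tset.mp hx with rfl | ⟨e, he, rfl⟩ <;> rcases mem_Tset.mp hy with rfl | ⟨f, hf, rfl⟩
    · exact absurd rfl hxy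
    · exact mg_adj_lr.mpr (hf ▸ hσ f)
    · exact mg_adj_rl.mpr (he ▸ hσ e)
    · refine mg_adj_rr.mpr ⟨fun hef => hxy (hef ▸ rfl), v, he ▸ hσ e, hf ▸ hσ f⟩
  · rintro p ⟨v, hp⟩ q ⟨u, hq⟩ hne a hap haq
    by_cases hvu : v = u
    · subst hvu
      exact (hQ v).2.1 p hp q hq hne a hap haq
    · have ha1 : a ∈ Tset G σ v := (hQ v).mem_of_mem_pair hp hap
      have ha2 : a ∈ Tset G σ u := (hQ u).mem_of_mem_pair hq haq
      rcases mem_Tset.mp ha1 with rfl | ⟨e, he, rfl⟩ <;>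
        rcases mem_Tset.mp ha2 with h2 | ⟨f, hf, h2⟩
      · exact hvu (inl_injective h2)
      · exact absurd h2 (by simp)
      · exact absurd h2 (by simp)
      · exact hvu ((he.symm.trans (congrArg σ (inr_injective h2))).trans hf)
  · intro w
    cases w with
    | inl v =>
      obtain ⟨p, hp, hwp⟩ := ((hQ v).2.2 (inl v)).mp (mem_Tset.mpr (Or.inl rfl))
      exact ⟨p, ⟨v, hp⟩, hwp⟩
    | inr e =>
      obtain ⟨p, hp, hwp⟩ := ((hQ (σ e)).2.2 (inr e)).mp (mem_Tset.mpr (Or.inr ⟨e, rfl, rfl⟩))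
      exact ⟨p, ⟨σ e, hp⟩, hwp⟩

lemma roundtrip1 {P : Set (Sym2 (V ⊕ G.edgeSet))} (hP : IsPerfMatchSet (middleGraph G) P) :
    Pun G (fun v => Qv P (ctrFn P hP) v) = P := by
  ext p
  constructor
  · rintro ⟨v, hp⟩
    exact (mem_Qv.mp hp).1
  · intro hp
    obtain ⟨a, b, rfl⟩ : ∃ a b, p = s(a, b) := ⟨p.out.1, p.out.2, pair_eq_out p⟩
    have hadj := (SimpleGraph.mem_edgeSet (middleGraph G)).mp (hP.1 hp)
    show ∃ v, s(a, b) ∈ Qv P (ctrFn P hP) v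
    cases a with
    | inl u =>
      cases b with
      | inl u' => exact absurd hadj mg_adj_ll
      | inr e => exact ⟨u, mem_Qv.mpr ⟨hp, Or.inl (Sym2.mem_mk_left _ _)⟩⟩
    | inr e =>
      exact ⟨ctrFn P hP e, mem_Qv.mpr ⟨hp, Or.inr ⟨e, Sym2.mem_mk_left _ _, rfl⟩⟩⟩

lemma roundtrip2a {σ : G.edgeSet → V} {Qf : V → Finset (Sym2 (V ⊕ G.edgeSet))}
    (hσ : ∀ e : G.edgeSet, σ e ∈ (e : Sym2 V))
    (hQ : ∀ v, IsPairing (Tset G σ v) (Qf v))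
    (hP : IsPerfMatchSet (middleGraph G) (Pun G Qf)) :
    ctrFn (Pun G Qf) hP = σ := by
  funext e
  apply ctrFn_eq hP
  obtain ⟨p, hp, hep⟩ := ((hQ (σ e)).2.2 (inr e)).mp (mem_Tset.mpr (Or.inr ⟨e, rfl, rfl⟩))
  obtain ⟨x, rfl⟩ := Sym2.mem_iff_exists.mp hep
  have hx : x ∈ Tset G σ (σ e) := (hQ (σ e)).mem_of_mem_pair hp (Sym2.mem_mk_right _ _)
  refine ⟨x, ⟨σ e, hp⟩, ?_⟩
  rcases mem_Tset.mp hx with rfl | ⟨f, hf, rfl⟩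
  · exact Or.inl rfl
  · exact Or.inr ⟨f, rfl, hσ e, hf ▸ hσ f⟩

lemma roundtrip2b {σ : G.edgeSet → V} {Qf : V → Finset (Sym2 (V ⊕ G.edgeSet))}
    (hσ : ∀ e : G.edgeSet, σ e ∈ (e : Sym2 V))
    (hQ : ∀ v, IsPairing (Tset G σ v) (Qf v)) (v : V) :
    Qv (Pun G Qf) σ v = Qf v := by
  ext p
  constructor
  · intro hp
    obtain ⟨hpP, hc⟩ := mem_Qv.mp hp
    obtain ⟨u, hu⟩ := hpP
    rcases hc with hlv | ⟨e, he, hσe⟩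
    · have : (inl v : V ⊕ G.edgeSet) ∈ Tset G σ u := (hQ u).mem_of_mem_pair hu hlv
      rcases mem_Tset.mp this with h | ⟨f, hf, h⟩
      · rwa [inl_injective h] 
      · exact absurd h (by simp)
    · have : (inr e : V ⊕ G.edgeSet) ∈ Tset G σ u := (hQ u).mem_of_mem_pair hu he
      rcases mem_Tset.mp this with h | ⟨f, hf, h⟩
      · exact absurd h (by simp)
      · have : σ e = u := (congrArg σ (inr_injective h)).trans hf
        rwa [← hσe, this]
  · intro hp
    refine mem_Qv.mpr ⟨⟨v, hp⟩, ?_⟩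
    obtain ⟨x, y, rfl, hxy, hx, hy⟩ : ∃ x y, p = s(x, y) ∧ x ≠ y ∧
        x ∈ Tset G σ v ∧ y ∈ Tset G σ v := by
      refine ⟨p.out.1, p.out.2, pair_eq_out p, ?_, ?_, ?_⟩
      · intro h
        exact (hQ v).1 p hp (by rw [pair_eq_out p, Sym2.mk_isDiag_iff]; exact h)
      · exact (hQ v).mem_of_mem_pair hp (Sym2.out_fst_mem p)
      · exact (hQ v).mem_of_mem_pair hp (Sym2.out_snd_mem p)
    rcases mem_Tset.mp hx with rfl | ⟨e, he, rfl⟩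
    · exact Or.inl (Sym2.mem_mk_left _ _)
    · rcases mem_Tset.mp hy with rfl | ⟨f, hf, rfl⟩
      · exact Or.inl (Sym2.mem_mk_right _ _)
      · exact Or.inr ⟨e, Sym2.mem_mk_left _ _, he⟩

variable (G) in
noncomputable def grandEquiv :
    {P : Set (Sym2 (V ⊕ G.edgeSet)) // IsPerfMatchSet (middleGraph G) P} ≃
    {x : (G.edgeSet → V) × (V → Finset (Sym2 (V ⊕ G.edgeSet))) //
      (∀ e : G.edgeSet, x.1 e ∈ (e : Sym2 V)) ∧ (∀ v, Odd (degFn G x.1 v)) ∧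
      ∀ v, IsPairing (Tset G x.1 v) (x.2 v)} where
  toFun := fun ⟨P, hP⟩ => ⟨(ctrFn P hP, fun v => Qv P (ctrFn P hP) v),
    fun e => ctrFn_mem hP e,
    fun v => odd_degFn hP v,
    fun v => isPairing_Qv hP v⟩
  invFun := fun ⟨x, hx⟩ => ⟨Pun G x.2, isPM_Pun hx.1 hx.2.2⟩
  left_inv := fun ⟨P, hP⟩ => Subtype.ext (roundtrip1 hP)
  right_inv := fun ⟨⟨σ, Qf⟩, hσ, hodd, hQ⟩ => by
    apply Subtype.ext
    have h1 : ctrFn (Pun G Qf) (isPM_Pun hσ hQ) = σ := roundtrip2a hσ hQ _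
    refine Prod.ext ?_ ?_
    · exact h1
    · show (fun v => Qv (Pun G Qf) (ctrFn (Pun G Qf) (isPM_Pun hσ hQ)) v) = Qf
      funext v
      rw [h1]
      exact roundtrip2b hσ hQ v

end Grand

section Final
variable {V : Type*} [Fintype V] [DecidableEq V] {G : SimpleGraph V} [DecidableRel G.Adj]

variable (G) in
noncomputable def sigmaEquiv :
    {x : (G.edgeSet → V) × (V → Finset (Sym2 (V ⊕ G.edgeSet))) //
      (∀ e : G.edgeSet, x.1 e ∈ (e : Sym2 V)) ∧ (∀ v, Odd (degFn G x.1 v)) ∧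
      ∀ v, IsPairing (Tset G x.1 v) (x.2 v)} ≃
    Σ σ : {σ : G.edgeSet → V // (∀ e : G.edgeSet, σ e ∈ (e : Sym2 V)) ∧
        ∀ v, Odd (degFn G σ v)},
      ∀ v : V, {Q : Finset (Sym2 (V ⊕ G.edgeSet)) // IsPairing (Tset G σ.1 v) Q} where
  toFun := fun ⟨x, h⟩ => ⟨⟨x.1, h.1, h.2.1⟩, fun v => ⟨x.2 v, h.2.2 v⟩⟩
  invFun := fun ⟨σ, q⟩ => ⟨(σ.1, fun v => (q v).1), σ.2.1, σ.2.2, fun v => (q v).2⟩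
  left_inv := fun ⟨x, h⟩ => rfl
  right_inv := fun ⟨σ, q⟩ => rfl

lemma degFn_le_three (hcubic : G.IsRegularOfDegree 3) {σ : G.edgeSet → V}
    (hσ : ∀ e : G.edgeSet, σ e ∈ (e : Sym2 V)) (v : V) : degFn G σ v ≤ 3 := by
  have hsub : ∀ e ∈ univ.filter (fun e : G.edgeSet => σ e = v),
      (e : Sym2 V) ∈ G.incidenceFinset v := by
    intro e he
    rw [SimpleGraph.mem_incidenceFinset]
    have h1 := (Finset.mem_filter.mp he).2
    exact ⟨e.2, h1 ▸ hσ e⟩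
  have hinj : Set.InjOn (fun e : G.edgeSet => (e : Sym2 V))
      (univ.filter (fun e : G.edgeSet => σ e = v)) := fun x _ y _ h => Subtype.ext h
  have hle := Finset.card_le_card_of_injOn _ hsub hinj
  rw [SimpleGraph.card_incidenceFinset_eq_degree, hcubic v] at hle
  exact hle

lemma card_pairings_Tset (hcubic : G.IsRegularOfDegree 3) {σ : G.edgeSet → V}
    (hσ : ∀ e : G.edgeSet, σ e ∈ (e : Sym2 V)) {v : V} (hodd : Odd (degFn G σ v)) :
    Nat.card {Q : Finset (Sym2 (V ⊕ G.edgeSet)) // IsPairing (Tset G σ v) Q} =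
      degFn G σ v := by
  have h3 := degFn_le_three hcubic hσ v
  obtain ⟨t, ht⟩ := hodd
  have h13 : degFn G σ v = 1 ∨ degFn G σ v = 3 := by omega
  rcases h13 with h | h
  · rw [h]
    exact card_pairings_two (by rw [card_Tset, h])
  · rw [h]
    exact card_pairings_four (by rw [card_Tset, h])

lemma prod_degFn_eq (hcubic : G.IsRegularOfDegree 3) {σ : G.edgeSet → V}
    (hσ : ∀ e : G.edgeSet, σ e ∈ (e : Sym2 V)) (hodd : ∀ v, Odd (degFn G σ v)) :
    ∏ v, degFn G σ v = 3 ^ ((G.edgeFinset.card - Fintype.card V) / 2) := by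
  classical
  set k := (univ.filter fun v => degFn G σ v = 3).card with hk
  have hdeg13 : ∀ v, degFn G σ v = 1 ∨ degFn G σ v = 3 := by
    intro v
    have h3 := degFn_le_three hcubic hσ v
    obtain ⟨t, ht⟩ := hodd v
    omega
  have hprod : ∏ v, degFn G σ v = 3 ^ k := by
    rw [← Finset.prod_filter_mul_prod_filter_not univ (fun v => degFn G σ v = 3)]
    have h1 : ∏ v ∈ univ.filter (fun v => degFn G σ v = 3), degFn G σ v = 3 ^ k := by
      rw [Finset.prod_congr rfl fun v hv => (Finset.mem_filter.mp hv).2,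
        Finset.prod_const, hk]
    have h2 : ∏ v ∈ univ.filter (fun v => ¬ degFn G σ v = 3), degFn G σ v = 1 := by
      refine Finset.prod_eq_one fun v hv => ?_
      have hne := (Finset.mem_filter.mp hv).2
      rcases hdeg13 v with h | h
      · exact h
      · exact absurd h hne
    rw [h1, h2, mul_one]
  have hsum : ∑ v, degFn G σ v = G.edgeFinset.card := by
    rw [sum_degFn, Finset.card_univ, SimpleGraph.edgeFinset, Set.toFinset_card]
  have hsum2 : ∑ v, degFn G σ v = 3 * k + (Fintype.card V - k) := by
    rw [← Finset.sum_filter_add_sum_filter_not univ (fun v => degFn G σ v = 3)]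
    have h1 : ∑ v ∈ univ.filter (fun v => degFn G σ v = 3), degFn G σ v = 3 * k := by
      rw [Finset.sum_congr rfl fun v hv => (Finset.mem_filter.mp hv).2,
        Finset.sum_const, smul_eq_mul, mul_comm]
    have h2 : ∑ v ∈ univ.filter (fun v => ¬ degFn G σ v = 3), degFn G σ v =
        Fintype.card V - k := by
      have h2a : ∑ v ∈ univ.filter (fun v => ¬ degFn G σ v = 3), degFn G σ v =
          (univ.filter (fun v => ¬ degFn G σ v = 3)).card := by
        rw [Finset.sum_congr rfl fun v hv => ?_, Finset.sum_const, smul_eq_mul, mul_one]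
        have hne := (Finset.mem_filter.mp hv).2
        rcases hdeg13 v with h | h
        · exact h
        · exact absurd h hne
      have h2b := Finset.card_filter_add_card_filter_not
        (s := (univ : Finset V)) (p := fun v => degFn G σ v = 3)
      rw [Finset.card_univ] at h2b
      rw [h2a]
      omega
    rw [h1, h2]
  have hkn : k ≤ Fintype.card V := by
    rw [hk, ← Finset.card_univ (α := V)]
    exact Finset.card_filter_le _ _
  have hkeq : k = (G.edgeFinset.card - Fintype.card V) / 2 := by omega
  rw [hprod, hkeq]

end Final

end MGaux

/-- If `G` is a connected cubic graph with `n` vertices and `m = 3n/2`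
edges, `m` even, then `p(M(G)) = 2^(m-n+1) · 3^((2n-m)/2) = 2^(n/2+1) · 3^(n/4)`. -/
theorem middle_graph_pm_cubic_even {V : Type*} [Fintype V] [DecidableEq V]
    (G : SimpleGraph V) [DecidableRel G.Adj]
    (hconn : G.Connected) (hcubic : G.IsRegularOfDegree 3)
    (heven : Even G.edgeFinset.card) :
    pmCount (middleGraph G) =
        2 ^ (G.edgeFinset.card - Fintype.card V + 1) *
          3 ^ ((2 * Fintype.card V - G.edgeFinset.card) / 2) ∧
      pmCount (middleGraph G) =
        2 ^ (Fintype.card V / 2 + 1) * 3 ^ (Fintype.card V / 4) := by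
  classical
  haveI : Nonempty V := hconn.nonempty
  have hn1 : 1 ≤ Fintype.card V := Fintype.card_pos
  have h2m : Fintype.card V * 3 = 2 * G.edgeFinset.card := by
    have hds := G.sum_degrees_eq_twice_card_edges
    rwa [Finset.sum_congr rfl fun v _ => hcubic v, Finset.sum_const, Finset.card_univ,
      smul_eq_mul] at hds
  have hmn : Fintype.card V ≤ G.edgeFinset.card := by omega
  have hnE : Even (Fintype.card V) := by
    obtain ⟨t, ht⟩ := heven
    exact ⟨(G.edgeFinset.card - Fintype.card V) / 2 + (2 * Fintype.card V - G.edgeFinset.card) / 2, by omega⟩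
  have hmain : pmCount (middleGraph G) =
      2 ^ (G.edgeFinset.card - Fintype.card V + 1) *
        3 ^ ((G.edgeFinset.card - Fintype.card V) / 2) := by
    have hA : pmCount (middleGraph G) =
        Nat.card {P : Set (Sym2 (V ⊕ G.edgeSet)) // IsPerfMatchSet (middleGraph G) P} := by
      simp only [pmCount]
      rw [← Nat.card_coe_set_eq]
      rfl
    rw [hA, Nat.card_congr (MGaux.grandEquiv G), Nat.card_congr (MGaux.sigmaEquiv G)]
    letI : Fintype {σ : G.edgeSet → V // (∀ e : G.edgeSet, σ e ∈ (e : Sym2 V)) ∧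
        ∀ v, Odd (MGaux.degFn G σ v)} := Fintype.ofFinite _
    letI : ∀ σ : {σ : G.edgeSet → V // (∀ e : G.edgeSet, σ e ∈ (e : Sym2 V)) ∧
        ∀ v, Odd (MGaux.degFn G σ v)},
        Fintype (∀ v : V, {Q : Finset (Sym2 (V ⊕ G.edgeSet)) //
          MGaux.IsPairing (MGaux.Tset G σ.1 v) Q}) := fun σ => Fintype.ofFinite _
    rw [Nat.card_eq_fintype_card, Fintype.card_sigma]
    have hper : ∀ σ : {σ : G.edgeSet → V // (∀ e : G.edgeSet, σ e ∈ (e : Sym2 V)) ∧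
        ∀ v, Odd (MGaux.degFn G σ v)},
        Fintype.card (∀ v : V, {Q : Finset (Sym2 (V ⊕ G.edgeSet)) //
          MGaux.IsPairing (MGaux.Tset G σ.1 v) Q}) =
          3 ^ ((G.edgeFinset.card - Fintype.card V) / 2) := by
      intro σ
      rw [← Nat.card_eq_fintype_card, Nat.card_pi,
        Finset.prod_congr rfl fun v _ =>
          MGaux.card_pairings_Tset hcubic σ.2.1 (σ.2.2 v)]
      exact MGaux.prod_degFn_eq hcubic σ.2.1 σ.2.2
    rw [Finset.sum_congr rfl fun σ _ => hper σ, Finset.sum_const, Finset.card_univ,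
      smul_eq_mul, ← Nat.card_eq_fintype_card,
      MGaux.card_oddOrient hconn hn1 hmn hnE heven]
  obtain ⟨t, ht⟩ := heven
  constructor
  · rw [hmain]
    have hexp : (G.edgeFinset.card - Fintype.card V) / 2 =
        (2 * Fintype.card V - G.edgeFinset.card) / 2 := by omega
    rw [hexp]
  · rw [hmain]
    have hexp1 : G.edgeFinset.card - Fintype.card V + 1 = Fintype.card V / 2 + 1 := by omega
    have hexp2 : (G.edgeFinset.card - Fintype.card V) / 2 = Fintype.card V / 4 := by omega
    rw [hexp1, hexp2]
end

section
/- Let G be a connected cubic (3-regular) simple graph with n vertices and m = 3n/2 edges, where m is odd, and let e be an edge of G that is not a cut edge (i.e., G - e is connected). Then the number of perfect matchings of the vertex-edge graph M(G - e) equals 2^(m-n) · 3^((2n-m-1)/2) = 2^(n/2) · 3^((n-2)/4). -/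
set_option linter.unusedSectionVars false
set_option linter.unusedVariables false
set_option maxHeartbeats 1600000

variable {V : Type*}

namespace MGPM

open Finset

variable [Fintype V] [DecidableEq V]

lemma shared_unique {e f : Sym2 V} (hef : e ≠ f) {w w' : V}
    (hwe : w ∈ e) (hwf : w ∈ f) (hw'e : w' ∈ e) (hw'f : w' ∈ f) : w = w' := by
  by_contra hne
  exact hef (Sym2.eq_of_ne_mem hne hwe hw'e hwf hw'f)

variable (H : SimpleGraph V) [DecidableRel H.Adj]

/-- in-degree of a head-assignment -/
def indeg (h : H.edgeSet → V) (v : V) : ℕ :=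
  #(univ.filter fun e : H.edgeSet => h e = v)

lemma indeg_le_degree (h : H.edgeSet → V) (hmem : ∀ e : H.edgeSet, h e ∈ (e : Sym2 V)) (v : V) :
    indeg H h v ≤ H.degree v := by
  classical
  rw [← SimpleGraph.card_incidenceFinset_eq_degree, indeg]
  refine Finset.card_le_card_of_injOn (fun e => (e : Sym2 V)) ?_ ?_
  · intro e he
    simp only [mem_filter, Finset.mem_coe] at he ⊢
    rw [SimpleGraph.mem_incidenceFinset]
    exact ⟨e.2, he.2 ▸ hmem e⟩
  · intro a _ b _ hab
    exact Subtype.ext hab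

lemma sum_indeg (h : H.edgeSet → V) :
    ∑ v, indeg H h v = Fintype.card H.edgeSet := by
  rw [← Finset.card_univ, Finset.card_eq_sum_card_fiberwise (fun e _ => mem_univ (h e))]
  rfl

lemma odd_indeg_cases (h : H.edgeSet → V) (hmem : ∀ e : H.edgeSet, h e ∈ (e : Sym2 V))
    (hdeg : ∀ v, H.degree v ≤ 3) (hodd : ∀ v, Odd (indeg H h v)) (v : V) :
    indeg H h v = 1 ∨ indeg H h v = 3 := by
  have h1 := indeg_le_degree H h hmem v
  have h2 := hdeg v
  have h3 := (hodd v)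
  rw [Nat.odd_iff] at h3
  omega

/-- first endpoint -/
noncomputable def a0 (e : H.edgeSet) : V := (e : Sym2 V).out.1
/-- second endpoint -/
noncomputable def b0 (e : H.edgeSet) : V := (e : Sym2 V).out.2

lemma edge_eq (e : H.edgeSet) : s(a0 H e, b0 H e) = (e : Sym2 V) := by
  rw [a0, b0]
  conv_rhs => rw [← Quot.out_eq (e : Sym2 V)]

lemma a0_ne_b0 (e : H.edgeSet) : a0 H e ≠ b0 H e := by
  intro h
  apply H.not_isDiag_of_mem_edgeSet e.2
  rw [← edge_eq H e, Sym2.mk_isDiag_iff]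
  exact h

lemma mem_cases {e : H.edgeSet} {v : V} (hv : v ∈ (e : Sym2 V)) :
    v = a0 H e ∨ v = b0 H e := by
  rw [← edge_eq H e, Sym2.mem_iff] at hv
  exact hv

lemma a0_mem (e : H.edgeSet) : a0 H e ∈ (e : Sym2 V) := by
  rw [← edge_eq H e]; exact Sym2.mem_mk_left _ _

lemma b0_mem (e : H.edgeSet) : b0 H e ∈ (e : Sym2 V) := by
  rw [← edge_eq H e]; exact Sym2.mem_mk_right _ _

/-- boundary map over GF(2) -/
def bnd : (H.edgeSet → ZMod 2) →ₗ[ZMod 2] (V → ZMod 2) where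
  toFun x := fun v => ∑ e : H.edgeSet, if v ∈ (e : Sym2 V) then x e else 0
  map_add' x y := by
    funext v
    simp only [Pi.add_apply, ← Finset.sum_add_distrib]
    exact Finset.sum_congr rfl fun e _ => by split <;> simp
  map_smul' c x := by
    funext v
    simp only [Pi.smul_apply, smul_eq_mul, RingHom.id_apply, Finset.mul_sum]
    exact Finset.sum_congr rfl fun e _ => by split <;> simp

/-- sum functional -/
def sgm : (V → ZMod 2) →ₗ[ZMod 2] ZMod 2 where
  toFun y := ∑ v, y v
  map_add' x y := Finset.sum_add_distrib
  map_smul' c x := by simp [Finset.mul_sum]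

lemma card_filter_mem_edge (e : H.edgeSet) :
    #(univ.filter fun v => v ∈ (e : Sym2 V)) = 2 := by
  have h1 : (univ.filter fun v => v ∈ (e : Sym2 V)) = {a0 H e, b0 H e} := by
    ext v
    simp only [mem_filter, mem_univ, true_and, mem_insert, mem_singleton]
    constructor
    · exact mem_cases H
    · rintro (rfl | rfl)
      · exact a0_mem H e
      · exact b0_mem H e
  rw [h1, Finset.card_insert_of_notMem (by simp [a0_ne_b0 H e]), Finset.card_singleton]

lemma sgm_bnd (x : H.edgeSet → ZMod 2) : sgm (bnd H x) = 0 := by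
  show (∑ v, ∑ e : H.edgeSet, if v ∈ (e : Sym2 V) then x e else 0) = 0
  rw [Finset.sum_comm]
  apply Finset.sum_eq_zero
  intro e _
  rw [← Finset.sum_filter, Finset.sum_const, card_filter_mem_edge, two_nsmul,
    CharTwo.add_self_eq_zero]

lemma add_self_fun (y : V → ZMod 2) : y + y = 0 :=
  funext fun v => CharTwo.add_self_eq_zero _

lemma bnd_single (e0 : H.edgeSet) :
    bnd H (Pi.single e0 1) = fun v => if v ∈ (e0 : Sym2 V) then 1 else 0 := by
  funext v
  show (∑ e : H.edgeSet, if v ∈ (e : Sym2 V) then Pi.single e0 1 e else 0) = _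
  rw [Finset.sum_eq_single e0]
  · rw [Pi.single_eq_same]
  · intro b _ hb
    rw [Pi.single_eq_of_ne hb]
    exact ite_self 0
  · intro h
    exact absurd (mem_univ e0) h

lemma pair_single_mem {u w : V} (h : H.Adj u w) :
    (Pi.single u 1 + Pi.single w 1 : V → ZMod 2) ∈ LinearMap.range (bnd H) := by
  refine ⟨Pi.single (⟨s(u, w), H.mem_edgeSet.mpr h⟩ : H.edgeSet) 1, ?_⟩
  rw [bnd_single]
  funext v
  have hne := h.ne
  by_cases hu : v = u <;> by_cases hw : v = w <;>
    simp [Pi.single_apply, Sym2.mem_iff, hu, hw] <;> subst_vars <;> simp_all <;> decide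

lemma pair_mem (hc : H.Preconnected) (u w : V) :
    (Pi.single u 1 + Pi.single w 1 : V → ZMod 2) ∈ LinearMap.range (bnd H) := by
  obtain ⟨p⟩ := hc u w
  induction p with
  | nil => rw [add_self_fun]; exact zero_mem _
  | @cons u b w h p ih =>
    have h1 := pair_single_mem H h
    have h2 := add_mem h1 ih
    have h3 : (Pi.single u 1 + Pi.single b 1) + (Pi.single b 1 + Pi.single w 1)
        = (Pi.single u 1 + Pi.single w 1 : V → ZMod 2) := by
      have hb := add_self_fun (V := V) (Pi.single b 1)
      calc (Pi.single u 1 + Pi.single b 1) + (Pi.single b 1 + Pi.single w 1)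
          = Pi.single u 1 + (Pi.single b 1 + Pi.single b 1) + Pi.single w 1 := by ring
        _ = Pi.single u 1 + Pi.single w 1 := by rw [hb]; ring
    rwa [h3] at h2

lemma sgm_single (a : V) : sgm (Pi.single a (1 : ZMod 2)) = 1 := by
  show (∑ v, Pi.single a (1 : ZMod 2) v) = 1
  simp [Pi.single_apply]

lemma zmod2_cases : ∀ z : ZMod 2, z = 0 ∨ z = 1 := by decide

lemma ker_sgm_le_range (hc : H.Preconnected) (y : V → ZMod 2) (hy : sgm y = 0) :
    y ∈ LinearMap.range (bnd H) := by
  suffices hs : ∀ n (y : V → ZMod 2), #(univ.filter fun v => y v ≠ 0) = n →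
      sgm y = 0 → y ∈ LinearMap.range (bnd H) from hs _ y rfl hy
  clear hy y
  intro n
  induction n using Nat.strong_induction_on with
  | _ n ih =>
  intro y hcard hy
  rcases Finset.eq_empty_or_nonempty (univ.filter fun v => y v ≠ 0) with hemp | ⟨a, ha⟩
  · have hy0 : y = 0 := by
      funext v
      by_contra hv
      exact absurd (hemp ▸ mem_filter.mpr ⟨mem_univ v, hv⟩) (Finset.notMem_empty v)
    rw [hy0]; exact zero_mem _
  · have hsum : (∑ v ∈ univ.filter fun v => y v ≠ 0, y v) = 0 := by
      rw [Finset.sum_filter_ne_zero]; exact hy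
    have hb : ∃ b ∈ univ.filter fun v => y v ≠ 0, b ≠ a := by
      by_contra hall
      push_neg at hall
      have hsing : (univ.filter fun v => y v ≠ 0) = {a} :=
        Finset.eq_singleton_iff_unique_mem.mpr ⟨ha, fun x hx => hall x hx⟩
      rw [hsing, Finset.sum_singleton] at hsum
      exact (mem_filter.mp ha).2 hsum
    obtain ⟨b, hbf, hba⟩ := hb
    have hya : y a = 1 := by
      rcases zmod2_cases (y a) with h | h
      · exact absurd h (mem_filter.mp ha).2
      · exact h
    have hyb : y b = 1 := by
      rcases zmod2_cases (y b) with h | h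
      · exact absurd h (mem_filter.mp hbf).2
      · exact h
    set y' : V → ZMod 2 := y + Pi.single a 1 + Pi.single b 1 with hy'def
    have hy'v : ∀ v, y' v = y v + (if v = a then 1 else 0) + (if v = b then 1 else 0) := by
      intro v; simp [hy'def, Pi.single_apply]
    have h11 : (1 : ZMod 2) + 1 = 0 := by decide
    have hfilt : (univ.filter fun v => y' v ≠ 0)
        = (((univ.filter fun v => y v ≠ 0)).erase a).erase b := by
      ext v
      simp only [mem_filter, mem_univ, true_and, Finset.mem_erase]
      rcases eq_or_ne v a with rfl | hva
      · simp [hy'v v, hya, hba.symm, h11]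
      · rcases eq_or_ne v b with rfl | hvb
        · simp [hy'v v, hyb, hba, hva, h11]
        · simp [hy'v v, hva, hvb]
    have hcard' : #(univ.filter fun v => y' v ≠ 0) < n := by
      rw [hfilt]
      have h1 : a ∈ (univ.filter fun v => y v ≠ 0) := ha
      have h2 : b ∈ ((univ.filter fun v => y v ≠ 0)).erase a := Finset.mem_erase.mpr ⟨hba, hbf⟩
      rw [Finset.card_erase_of_mem h2, Finset.card_erase_of_mem h1, hcard]
      have : 0 < n := hcard ▸ Finset.card_pos.mpr ⟨a, ha⟩
      omega
    have hy's : sgm y' = 0 := by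
      rw [hy'def, map_add, map_add, hy, sgm_single, sgm_single]
      decide
    have hmem' := ih _ hcard' y' rfl hy's
    have hdecomp : y = y' + (Pi.single a 1 + Pi.single b 1) := by
      rw [hy'def]
      have h1 := add_self_fun (V := V) (Pi.single a 1)
      have h2 := add_self_fun (V := V) (Pi.single b 1)
      calc y = y + (Pi.single a 1 + Pi.single a 1) + (Pi.single b 1 + Pi.single b 1) := by
            rw [h1, h2]; ring
        _ = y + Pi.single a 1 + Pi.single b 1 + (Pi.single a 1 + Pi.single b 1) := by ring
    rw [hdecomp]
    exact add_mem hmem' (pair_mem H hc a b)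

lemma range_bnd (hc : H.Preconnected) : LinearMap.range (bnd H) = LinearMap.ker sgm := by
  apply le_antisymm
  · rintro y ⟨x, rfl⟩
    exact LinearMap.mem_ker.mpr (sgm_bnd H x)
  · intro y hy
    exact ker_sgm_le_range H hc y (LinearMap.mem_ker.mp hy)


lemma bnd_apply (x : H.edgeSet → ZMod 2) (v : V) :
    bnd H x v = ∑ e : H.edgeSet, if v ∈ (e : Sym2 V) then x e else 0 := rfl

lemma sgm_apply (y : V → ZMod 2) : sgm y = ∑ v, y v := rfl

lemma add_self' {α : Type*} (y : α → ZMod 2) : y + y = 0 :=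
  funext fun v => CharTwo.add_self_eq_zero _

lemma cast_odd_iff (k : ℕ) : ((k : ZMod 2) = 1) ↔ Odd k := by
  rw [Nat.odd_iff, ← ZMod.natCast_mod k 2]
  rcases Nat.mod_two_eq_zero_or_one k with h | h <;> rw [h]
  · simp only [Nat.cast_zero]
    constructor
    · intro hh; exact absurd hh (by decide)
    · intro hh; exact absurd hh (by decide)
  · simp

section CountKer

variable [Nonempty V]

lemma sgm_surj : Function.Surjective (sgm (V := V)) := by
  intro c
  refine ⟨Pi.single (Classical.arbitrary V) c, ?_⟩
  rw [sgm_apply]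
  simp [Pi.single_apply]

lemma card_ker_sgm : Nat.card (LinearMap.ker (sgm (V := V))) = 2 ^ (Fintype.card V - 1) := by
  have h1 := Submodule.card_eq_card_quotient_mul_card (LinearMap.ker (sgm (V := V)))
  have h2 : Nat.card ((V → ZMod 2) ⧸ LinearMap.ker (sgm (V := V))) = 2 := by
    rw [Nat.card_congr (LinearMap.quotKerEquivRange (sgm (V := V))).toEquiv,
      LinearMap.range_eq_top.mpr sgm_surj, Nat.card_congr Submodule.topEquiv.toEquiv,
      Nat.card_eq_fintype_card, ZMod.card]
  have h3 : Nat.card (V → ZMod 2) = 2 ^ Fintype.card V := by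
    rw [Nat.card_eq_fintype_card, Fintype.card_fun, ZMod.card]
  have h4 : 1 ≤ Fintype.card V := Fintype.card_pos
  have h5 : Fintype.card V - 1 + 1 = Fintype.card V := by omega
  rw [h2, h3] at h1
  have h6 : 2 ^ Fintype.card V = 2 ^ (Fintype.card V - 1) * 2 := by
    rw [← pow_succ, h5]
  rw [h6] at h1
  exact (Nat.eq_of_mul_eq_mul_right (by norm_num) h1).symm

lemma card_ker_bnd (hc : H.Preconnected) :
    Nat.card (LinearMap.ker (bnd H)) =
      2 ^ (Fintype.card H.edgeSet + 1 - Fintype.card V) := by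
  have h1 := Submodule.card_eq_card_quotient_mul_card (LinearMap.ker (bnd H))
  have h2 : Nat.card ((H.edgeSet → ZMod 2) ⧸ LinearMap.ker (bnd H))
      = 2 ^ (Fintype.card V - 1) := by
    rw [Nat.card_congr (LinearMap.quotKerEquivRange (bnd H)).toEquiv, range_bnd H hc,
      card_ker_sgm]
  have h3 : Nat.card (H.edgeSet → ZMod 2) = 2 ^ Fintype.card H.edgeSet := by
    rw [Nat.card_eq_fintype_card, Fintype.card_fun, ZMod.card]
  rw [h2, h3] at h1
  have hK : 0 < Nat.card (LinearMap.ker (bnd H)) := Nat.card_pos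
  have hle : Fintype.card V - 1 ≤ Fintype.card H.edgeSet := by
    have hdvd : 2 ^ (Fintype.card V - 1) ∣ 2 ^ Fintype.card H.edgeSet :=
      ⟨Nat.card (LinearMap.ker (bnd H)), by rw [h1, mul_comm]⟩
    exact (Nat.pow_dvd_pow_iff_le_right (by norm_num)).mp hdvd
  have h6 : 2 ^ Fintype.card H.edgeSet
      = 2 ^ (Fintype.card H.edgeSet + 1 - Fintype.card V) * 2 ^ (Fintype.card V - 1) := by
    rw [← pow_add]
    congr 1
    have h4 : 1 ≤ Fintype.card V := Fintype.card_pos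
    omega
  rw [h6] at h1
  exact (Nat.eq_of_mul_eq_mul_right (by positivity) h1).symm

/-- target parity vector -/
noncomputable def c0 : V → ZMod 2 := fun v => 1 + (indeg H (a0 H) v : ZMod 2)

lemma c0_mem_range (hc : H.Preconnected)
    (hpar : Even (Fintype.card H.edgeSet + Fintype.card V)) :
    c0 H ∈ LinearMap.range (bnd H) := by
  rw [range_bnd H hc, LinearMap.mem_ker, sgm_apply]
  show (∑ v, (1 + (indeg H (a0 H) v : ZMod 2))) = 0
  rw [Finset.sum_add_distrib, Finset.sum_const, ← Nat.cast_sum, sum_indeg, nsmul_eq_mul,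
    mul_one, card_univ, ← Nat.cast_add]
  rw [ZMod.natCast_eq_zero_iff]
  rw [Nat.add_comm] at hpar
  exact hpar.two_dvd

lemma card_fiber (hc : H.Preconnected)
    (hpar : Even (Fintype.card H.edgeSet + Fintype.card V)) :
    Nat.card {x : H.edgeSet → ZMod 2 // bnd H x = c0 H} =
      2 ^ (Fintype.card H.edgeSet + 1 - Fintype.card V) := by
  obtain ⟨x0, hx0⟩ := c0_mem_range H hc hpar
  have key : ∀ x : H.edgeSet → ZMod 2, bnd H x = c0 H ↔ bnd H (x + x0) = 0 := by
    intro x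
    rw [map_add, hx0]
    constructor
    · intro h; rw [h, add_self']
    · intro h
      have := congrArg (· + c0 H) h
      simpa [add_assoc, add_self'] using this
  have e : {x : H.edgeSet → ZMod 2 // bnd H x = c0 H} ≃ LinearMap.ker (bnd H) :=
    { toFun := fun x => ⟨x.1 + x0, LinearMap.mem_ker.mpr ((key x.1).mp x.2)⟩
      invFun := fun y => ⟨y.1 + x0, by
        rw [map_add, LinearMap.mem_ker.mp y.2, hx0, zero_add]⟩
      left_inv := fun x => Subtype.ext (by
        simp only [add_assoc, add_self', add_zero])
      right_inv := fun y => Subtype.ext (by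
        simp only [add_assoc, add_self', add_zero]) }
  rw [Nat.card_congr e, card_ker_bnd H hc]

end CountKer

abbrev HeadT := {h : H.edgeSet → V // ∀ e : H.edgeSet, h e ∈ (e : Sym2 V)}
abbrev OHeadT := {h : HeadT H // ∀ v, Odd (indeg H h.1 v)}

noncomputable def headEquiv : HeadT H ≃ (H.edgeSet → ZMod 2) where
  toFun h := fun e => if h.1 e = a0 H e then 0 else 1
  invFun x := ⟨fun e => if x e = 0 then a0 H e else b0 H e, fun e => by
    dsimp only
    split
    · exact a0_mem H e
    · exact b0_mem H e⟩
  left_inv h := Subtype.ext (funext fun e => by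
    dsimp only
    by_cases hh : h.1 e = a0 H e
    · simp [hh]
    · rcases mem_cases H (h.2 e) with h1 | h1
      · exact absurd h1 hh
      · simp only [if_neg hh, if_neg (by decide : ¬(1 : ZMod 2) = 0)]; exact h1.symm)
  right_inv x := funext fun e => by
    dsimp only
    by_cases hx : x e = 0
    · simp [hx]
    · simp only [if_neg hx, if_neg (Ne.symm (a0_ne_b0 H e))]
      rcases zmod2_cases (x e) with h | h
      · exact absurd h hx
      · exact h.symm

lemma headEquiv_apply (h : HeadT H) (e : H.edgeSet) :
    headEquiv H h e = if h.1 e = a0 H e then 0 else 1 := rfl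

lemma indeg_cast_sum (h : H.edgeSet → V) (v : V) :
    ((indeg H h v : ZMod 2)) = ∑ e : H.edgeSet, if h e = v then 1 else 0 := by
  rw [indeg, Finset.card_filter, Nat.cast_sum]
  exact Finset.sum_congr rfl fun e _ => by split <;> simp

lemma indeg_identity (h : HeadT H) (v : V) :
    ((indeg H h.1 v : ZMod 2)) = (indeg H (a0 H) v : ZMod 2) + bnd H (headEquiv H h) v := by
  rw [indeg_cast_sum, indeg_cast_sum, bnd_apply, ← Finset.sum_add_distrib]
  apply Finset.sum_congr rfl
  intro e _
  rw [headEquiv_apply]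
  have h11 : (1 : ZMod 2) + 1 = 0 := by decide
  by_cases hv : v ∈ (e : Sym2 V)
  · rw [if_pos hv]
    have hne := a0_ne_b0 H e
    rcases mem_cases H (h.2 e) with h1 | h1 <;> rcases mem_cases H hv with h2 | h2 <;>
        subst h2 <;> rw [h1]
    all_goals simp [hne, Ne.symm hne, h11]
  · have h1 : ¬(h.1 e = v) := fun hh => hv (hh ▸ h.2 e)
    have h2 : ¬(a0 H e = v) := fun hh => hv (hh ▸ a0_mem H e)
    rw [if_neg hv, if_neg h1, if_neg h2, add_zero]

lemma ohead_iff (h : HeadT H) :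
    (∀ v, Odd (indeg H h.1 v)) ↔ bnd H (headEquiv H h) = c0 H := by
  rw [funext_iff]
  apply forall_congr'
  intro v
  rw [← cast_odd_iff]
  have hid := indeg_identity H h v
  have c0v : c0 H v = 1 + (indeg H (a0 H) v : ZMod 2) := rfl
  rw [c0v]
  constructor
  · intro h1
    have key : ∀ a b c : ZMod 2, a = b + c → a = 1 → c = 1 + b := by decide
    exact key _ _ _ hid h1
  · intro h1
    rw [hid, h1]
    have key : ∀ b : ZMod 2, b + (1 + b) = 1 := by decide
    exact key _

noncomputable def oheadEquiv : OHeadT H ≃ {x : H.edgeSet → ZMod 2 // bnd H x = c0 H} :=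
  Equiv.subtypeEquiv (headEquiv H) (fun h => ohead_iff H h)

lemma card_OHead [Nonempty V] (hc : H.Preconnected)
    (hpar : Even (Fintype.card H.edgeSet + Fintype.card V)) :
    Nat.card (OHeadT H) = 2 ^ (Fintype.card H.edgeSet + 1 - Fintype.card V) := by
  rw [Nat.card_congr (oheadEquiv H), card_fiber H hc hpar]

lemma mg_adj_inl_inr {v : V} {e : H.edgeSet} :
    (middleGraph H).Adj (Sum.inl v) (Sum.inr e) ↔ v ∈ (e : Sym2 V) := Iff.rfl

lemma mg_adj_inr_inr {e f : H.edgeSet} :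
    (middleGraph H).Adj (Sum.inr e) (Sum.inr f) ↔
      e ≠ f ∧ ∃ w, w ∈ (e : Sym2 V) ∧ w ∈ (f : Sym2 V) := Iff.rfl

lemma mg_edge_shape {p : Sym2 (V ⊕ H.edgeSet)} (hp : p ∈ (middleGraph H).edgeSet) :
    (∃ (v : V) (e : H.edgeSet), v ∈ (e : Sym2 V) ∧ p = s(Sum.inl v, Sum.inr e)) ∨
    (∃ e f : H.edgeSet, e ≠ f ∧ (∃ w, w ∈ (e : Sym2 V) ∧ w ∈ (f : Sym2 V)) ∧
      p = s(Sum.inr e, Sum.inr f)) := by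
  induction p with
  | _ a b =>
    rw [SimpleGraph.mem_edgeSet] at hp
    rcases a with va | ea <;> rcases b with vb | eb
    · exact hp.elim
    · exact Or.inl ⟨va, eb, hp, rfl⟩
    · exact Or.inl ⟨vb, ea, hp, Sym2.eq_swap⟩
    · exact Or.inr ⟨ea, eb, hp.1, hp.2, rfl⟩

variable {H}
variable {P : Set (Sym2 (V ⊕ H.edgeSet))}

lemma pm_unique_mem (hP : IsPerfMatchSet (middleGraph H) P) {p q : Sym2 (V ⊕ H.edgeSet)}
    {a : V ⊕ H.edgeSet} (hp : p ∈ P) (hq : q ∈ P) (hap : a ∈ p) (haq : a ∈ q) : p = q := by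
  by_contra hne
  exact hP.2.1 p hp q hq hne a hap haq

lemma pm_matchV (hP : IsPerfMatchSet (middleGraph H) P) (v : V) :
    ∃ e : H.edgeSet, s(Sum.inl v, Sum.inr e) ∈ P := by
  obtain ⟨p, hp, hvp⟩ := hP.2.2 (Sum.inl v)
  rcases mg_edge_shape H (hP.1 hp) with ⟨v', e, _, rfl⟩ | ⟨e, f, _, _, rfl⟩
  · rw [Sym2.mem_iff] at hvp
    rcases hvp with h | h
    · obtain rfl : v = v' := by injection h
      exact ⟨e, hp⟩
    · exact absurd h (Sum.inl_ne_inr)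
  · rw [Sym2.mem_iff] at hvp
    rcases hvp with h | h <;> exact absurd h (Sum.inl_ne_inr)

lemma pm_matchV_unique (hP : IsPerfMatchSet (middleGraph H) P) {v : V} {e e' : H.edgeSet}
    (h1 : s(Sum.inl v, Sum.inr e) ∈ P) (h2 : s(Sum.inl v, Sum.inr e') ∈ P) : e = e' := by
  have heq := pm_unique_mem hP h1 h2 (Sym2.mem_mk_left _ _) (Sym2.mem_mk_left _ _)
  rw [Sym2.eq_iff] at heq
  rcases heq with ⟨_, h⟩ | ⟨h, _⟩
  · injection h
  · exact absurd h (Sum.inl_ne_inr)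

lemma pm_matchE_unique (hP : IsPerfMatchSet (middleGraph H) P) {v v' : V} {e : H.edgeSet}
    (h1 : s(Sum.inl v, Sum.inr e) ∈ P) (h2 : s(Sum.inl v', Sum.inr e) ∈ P) : v = v' := by
  have heq := pm_unique_mem hP h1 h2 (Sym2.mem_mk_right _ _) (Sym2.mem_mk_right _ _)
  rw [Sym2.eq_iff] at heq
  rcases heq with ⟨h, _⟩ | ⟨h, _⟩
  · injection h
  · exact absurd h (Sum.inl_ne_inr)

lemma pm_not_both (hP : IsPerfMatchSet (middleGraph H) P) {v : V} {e f : H.edgeSet}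
    (h1 : s(Sum.inl v, Sum.inr e) ∈ P) (h2 : s(Sum.inr e, Sum.inr f) ∈ P) : False := by
  have heq := pm_unique_mem hP h1 h2 (Sym2.mem_mk_right _ _) (Sym2.mem_mk_left _ _)
  rw [Sym2.eq_iff] at heq
  rcases heq with ⟨h, _⟩ | ⟨h, _⟩ <;> exact absurd h (Sum.inl_ne_inr)

lemma pm_partner (hP : IsPerfMatchSet (middleGraph H) P) {e : H.edgeSet}
    (hnm : ¬∃ v, s(Sum.inl v, Sum.inr e) ∈ P) :
    ∃ f, e ≠ f ∧ s(Sum.inr e, Sum.inr f) ∈ P := by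
  obtain ⟨p, hp, hep⟩ := hP.2.2 (Sum.inr e)
  rcases mg_edge_shape H (hP.1 hp) with ⟨v, e', _, rfl⟩ | ⟨a, b, hab, _, rfl⟩
  · rw [Sym2.mem_iff] at hep
    rcases hep with h | h
    · exact absurd h.symm (Sum.inl_ne_inr)
    · obtain rfl : e = e' := by injection h
      exact absurd ⟨v, hp⟩ hnm
  · rw [Sym2.mem_iff] at hep
    rcases hep with h | h
    · obtain rfl : e = a := by injection h
      exact ⟨b, hab, hp⟩
    · obtain rfl : e = b := by injection h
      refine ⟨a, Ne.symm hab, ?_⟩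
      rwa [Sym2.eq_swap] at hp

lemma pm_partner_unique (hP : IsPerfMatchSet (middleGraph H) P) {e f f' : H.edgeSet}
    (h1 : s(Sum.inr e, Sum.inr f) ∈ P) (h2 : s(Sum.inr e, Sum.inr f') ∈ P) : f = f' := by
  have heq := pm_unique_mem hP h1 h2 (Sym2.mem_mk_left _ _) (Sym2.mem_mk_left _ _)
  rw [Sym2.eq_iff] at heq
  rcases heq with ⟨_, h⟩ | ⟨h1', h2'⟩
  · injection h
  · have hf'e : e = f' := by injection h1'
    have hfe : f = e := by injection h2'
    rw [hfe, hf'e]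

lemma head_three_unique (hdeg : ∀ v, H.degree v ≤ 3) (h : H.edgeSet → V)
    (hmem : ∀ e : H.edgeSet, h e ∈ (e : Sym2 V)) {v : V} {g0 e f f' : H.edgeSet}
    (hg0 : h g0 = v) (he : h e = v) (hf : h f = v) (hf' : h f' = v)
    (hge : e ≠ g0) (hgf : f ≠ g0) (hgf' : f' ≠ g0) (hef : e ≠ f) (hef' : e ≠ f') :
    f = f' := by
  by_contra hne
  have hsub : ({g0, e, f, f'} : Finset H.edgeSet) ⊆ univ.filter fun x => h x = v := by
    intro x hx
    simp only [Finset.mem_insert, Finset.mem_singleton] at hx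
    rcases hx with rfl | rfl | rfl | rfl <;>
      exact mem_filter.mpr ⟨mem_univ _, by assumption⟩
  have hcard : ({g0, e, f, f'} : Finset H.edgeSet).card = 4 := by
    rw [Finset.card_insert_of_notMem (by simp [Ne.symm hge, Ne.symm hgf, Ne.symm hgf']),
      Finset.card_insert_of_notMem (by simp [hef, hef']),
      Finset.card_insert_of_notMem (by simp [hne]), Finset.card_singleton]
  have hle := Finset.card_le_card hsub
  have hd := le_trans (indeg_le_degree H h hmem v) (hdeg v)
  rw [hcard] at hle
  have : indeg H h v = #(univ.filter fun x => h x = v) := rfl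
  omega

variable (H)

/-- the perfect matching of the middle graph encoded by a head function and a selection -/
def encodeSet (h : H.edgeSet → V) (g : V → H.edgeSet) : Set (Sym2 (V ⊕ H.edgeSet)) :=
  {p | (∃ v : V, p = s(Sum.inl v, Sum.inr (g v))) ∨
       (∃ e f : H.edgeSet, e ≠ f ∧ h e = h f ∧ g (h e) ≠ e ∧ g (h e) ≠ f ∧
         p = s(Sum.inr e, Sum.inr f))}

variable {H}

lemma indeg_eq_three (h : H.edgeSet → V) (g : V → H.edgeSet)
    (hmem : ∀ e : H.edgeSet, h e ∈ (e : Sym2 V))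
    (hodd : ∀ v, Odd (indeg H h v)) (hdeg : ∀ v, H.degree v ≤ 3)
    (hgh : ∀ v, h (g v) = v) {e : H.edgeSet} (hne : e ≠ g (h e)) :
    indeg H h (h e) = 3 := by
  set v := h e with hv
  have h2 : 1 < indeg H h v := by
    rw [indeg, Finset.one_lt_card]
    refine ⟨g v, mem_filter.mpr ⟨mem_univ _, hgh v⟩, e,
      mem_filter.mpr ⟨mem_univ _, rfl⟩, fun hc => hne (hc ▸ rfl)⟩
  have h3 := le_trans (indeg_le_degree H h hmem v) (hdeg v)
  have h4 := (hodd v)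
  rw [Nat.odd_iff] at h4
  omega

lemma encode_partner (h : H.edgeSet → V) (g : V → H.edgeSet)
    (hmem : ∀ e : H.edgeSet, h e ∈ (e : Sym2 V))
    (hodd : ∀ v, Odd (indeg H h v)) (hdeg : ∀ v, H.degree v ≤ 3)
    (hgh : ∀ v, h (g v) = v) (e : H.edgeSet) (hne : e ≠ g (h e)) :
    ∃ f, e ≠ f ∧ h e = h f ∧ g (h e) ≠ f ∧
      s(Sum.inr e, Sum.inr f) ∈ encodeSet H h g := by
  have h3 : indeg H h (h e) = 3 := indeg_eq_three h g hmem hodd hdeg hgh hne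
  have hTcard : 1 ≤ #((univ.filter fun x : H.edgeSet => h x = h e) \ {g (h e), e}) := by
    have hcard2 : #({g (h e), e} : Finset H.edgeSet) ≤ 2 := Finset.card_insert_le _ _
    have hsd := Finset.le_card_sdiff ({g (h e), e} : Finset H.edgeSet)
      (univ.filter fun x : H.edgeSet => h x = h e)
    rw [indeg] at h3
    omega
  have hpos : 0 < #((univ.filter fun x : H.edgeSet => h x = h e) \ {g (h e), e}) := by omega
  obtain ⟨f, hf⟩ := Finset.card_pos.mp hpos
  rw [Finset.mem_sdiff, mem_filter] at hf
  obtain ⟨⟨_, hfv⟩, hfne⟩ := hf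
  simp only [Finset.mem_insert, Finset.mem_singleton, not_or] at hfne
  refine ⟨f, fun hc => hfne.2 hc.symm, hfv.symm, fun hc => hfne.1 hc.symm, ?_⟩
  exact Or.inr ⟨e, f, fun hc => hfne.2 hc.symm, hfv.symm,
    fun hc => hne hc.symm, fun hc => hfne.1 hc.symm, rfl⟩

lemma encode_isPM (h : H.edgeSet → V) (g : V → H.edgeSet)
    (hmem : ∀ e : H.edgeSet, h e ∈ (e : Sym2 V))
    (hodd : ∀ v, Odd (indeg H h v)) (hdeg : ∀ v, H.degree v ≤ 3)
    (hgh : ∀ v, h (g v) = v) :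
    IsPerfMatchSet (middleGraph H) (encodeSet H h g) := by
  refine ⟨?_, ?_, ?_⟩
  · rintro p (⟨v, rfl⟩ | ⟨e, f, hef, hhef, hge, hgf, rfl⟩)
    · rw [SimpleGraph.mem_edgeSet, mg_adj_inl_inr]
      have := hmem (g v)
      rwa [hgh v] at this
    · rw [SimpleGraph.mem_edgeSet, mg_adj_inr_inr]
      exact ⟨hef, h e, hmem e, by rw [hhef]; exact hmem f⟩
  · rintro p hp q hq hpq a hap haq
    rcases hp with ⟨v, rfl⟩ | ⟨e, f, hef, hhef, hge, hgf, rfl⟩ <;>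
      rcases hq with ⟨v', rfl⟩ | ⟨e', f', hef', hhef', hge', hgf', rfl⟩
    · -- A A
      rcases Sym2.mem_iff.mp hap with rfl | rfl <;>
        rcases Sym2.mem_iff.mp haq with hh | hh
      · obtain rfl : v = v' := by injection hh
        exact hpq rfl
      · exact absurd hh Sum.inl_ne_inr
      · exact absurd hh.symm Sum.inl_ne_inr
      · obtain hgg : g v = g v' := by injection hh
        obtain rfl : v = v' := by rw [← hgh v, ← hgh v', hgg]
        exact hpq rfl
    · -- A B
      rcases Sym2.mem_iff.mp hap with rfl | rfl <;>
        rcases Sym2.mem_iff.mp haq with hh | hh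
      · exact absurd hh Sum.inl_ne_inr
      · exact absurd hh Sum.inl_ne_inr
      · obtain hgg : g v = e' := by injection hh
        have hv' : h e' = v := by rw [← hgg, hgh v]
        exact hge' (by rw [hv', hgg])
      · obtain hgg : g v = f' := by injection hh
        have hvf : h f' = v := by rw [← hgg, hgh v]
        exact hgf' (by rw [hhef', hvf, hgg])
    · -- B A
      rcases Sym2.mem_iff.mp hap with rfl | rfl <;>
        rcases Sym2.mem_iff.mp haq with hh | hh
      · exact absurd hh.symm Sum.inl_ne_inr
      · obtain hgg : e = g v' := by injection hh
        have hve : h e = v' := by rw [hgg, hgh]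
        exact hge (by rw [hve, ← hgg])
      · exact absurd hh.symm Sum.inl_ne_inr
      · obtain hgg : f = g v' := by injection hh
        have hvf : h f = v' := by rw [hgg, hgh]
        exact hgf (by rw [hhef, hvf, ← hgg])
    · -- B B
      have hg0 : h (g (h e)) = h e := hgh (h e)
      rcases Sym2.mem_iff.mp hap with rfl | rfl <;>
        rcases Sym2.mem_iff.mp haq with hh | hh
      · -- e = e'
        obtain hEE : e = e' := by injection hh
        have hv' : h e' = h e := by rw [← hEE]
        have hff' : f = f' := by
          refine head_three_unique hdeg h hmem hg0 rfl hhef.symm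
            (by rw [hhef'.symm, hv']) (Ne.symm hge) (Ne.symm hgf)
            (fun hc => hgf' (by rw [hv']; exact hc.symm)) hef (hEE ▸ hef')
        exact hpq (by rw [hEE, hff'])
      · -- e = f'
        obtain hEF : e = f' := by injection hh
        have hv' : h e' = h e := by rw [hhef', ← hEF]
        have hfe' : f = e' := by
          refine head_three_unique hdeg h hmem hg0 rfl hhef.symm hv'
            (Ne.symm hge) (Ne.symm hgf)
            (fun hc => hge' (by rw [hv']; exact hc.symm)) hef
            (fun hc => hef' (hc.symm.trans hEF))
        apply hpq
        rw [show e' = f from hfe'.symm, show f' = e from hEF.symm]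
        exact Sym2.eq_swap
      · -- f = e'
        obtain hFE : f = e' := by injection hh
        have hvf : h f = h e := hhef.symm
        have hv' : h e' = h e := by rw [← hFE, hvf]
        have hvf' : h f' = h e := by rw [← hhef', hv']
        have hef'' : e = f' := by
          refine head_three_unique hdeg h hmem hg0 hvf rfl hvf'
            (Ne.symm hgf) (Ne.symm hge)
            (fun hc => hgf' (by rw [hv']; exact hc.symm)) (Ne.symm hef)
            (fun hc => hef' (by rw [← hFE, hc]))
        apply hpq
        rw [show e' = f from hFE.symm, show f' = e from hef''.symm]
        exact Sym2.eq_swap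
      · -- f = f'
        obtain hFF : f = f' := by injection hh
        have hvf : h f = h e := hhef.symm
        have hv' : h e' = h e := by rw [hhef', ← hFF, hvf]
        have hee' : e = e' := by
          refine head_three_unique hdeg h hmem hg0 hvf rfl hv'
            (Ne.symm hgf) (Ne.symm hge)
            (fun hc => hge' (by rw [hv']; exact hc.symm)) (Ne.symm hef)
            (fun hc => hef' (by rw [← hc, ← hFF]))
        exact hpq (by rw [hFF, hee'])
  · intro w
    rcases w with v | e
    · exact ⟨s(Sum.inl v, Sum.inr (g v)), Or.inl ⟨v, rfl⟩, Sym2.mem_mk_left _ _⟩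
    · by_cases hc : e = g (h e)
      · refine ⟨s(Sum.inl (h e), Sum.inr (g (h e))), Or.inl ⟨h e, rfl⟩, ?_⟩
        rw [← hc]
        exact Sym2.mem_mk_right _ _
      · obtain ⟨f, _, _, _, hmemB⟩ := encode_partner h g hmem hodd hdeg hgh e hc
        exact ⟨_, hmemB, Sym2.mem_mk_left _ _⟩

lemma pm_decode (hdeg : ∀ v, H.degree v ≤ 3) (hP : IsPerfMatchSet (middleGraph H) P) :
    ∃ (h : H.edgeSet → V) (g : V → H.edgeSet),
      (∀ e : H.edgeSet, h e ∈ (e : Sym2 V)) ∧ (∀ v, Odd (indeg H h v)) ∧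
      (∀ v, h (g v) = v) ∧ encodeSet H h g = P := by
  classical
  have hgex : ∀ v, ∃ e : H.edgeSet, s(Sum.inl v, Sum.inr e) ∈ P := pm_matchV hP
  set g : V → H.edgeSet := fun v => (hgex v).choose with hgdef
  have hg : ∀ v, s(Sum.inl v, Sum.inr (g v)) ∈ P := fun v => (hgex v).choose_spec
  have hshared : ∀ {e f : H.edgeSet}, s(Sum.inr e, Sum.inr f) ∈ P →
      ∃ w, w ∈ (e : Sym2 V) ∧ w ∈ (f : Sym2 V) := by
    intro e f hm
    exact ((mg_adj_inr_inr H).mp ((SimpleGraph.mem_edgeSet _).mp (hP.1 hm))).2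
  have hedne : ∀ {e f : H.edgeSet}, s(Sum.inr e, Sum.inr f) ∈ P → e ≠ f := by
    intro e f hm
    exact ((mg_adj_inr_inr H).mp ((SimpleGraph.mem_edgeSet _).mp (hP.1 hm))).1
  set h : H.edgeSet → V := fun e =>
    if hm : ∃ v, s(Sum.inl v, Sum.inr e) ∈ P then hm.choose
    else (hshared (pm_partner hP hm).choose_spec.2).choose with hdef
  have hmatched : ∀ {v : V} {e : H.edgeSet}, s(Sum.inl v, Sum.inr e) ∈ P → h e = v := by
    intro v e hm
    have hex : ∃ u, s(Sum.inl u, Sum.inr e) ∈ P := ⟨v, hm⟩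
    rw [hdef]
    dsimp only
    rw [dif_pos hex]
    exact pm_matchE_unique hP hex.choose_spec hm
  have hpaired : ∀ {e f : H.edgeSet}, s(Sum.inr e, Sum.inr f) ∈ P →
      h e ∈ (e : Sym2 V) ∧ h e ∈ (f : Sym2 V) := by
    intro e f hm
    have hnm : ¬∃ v, s(Sum.inl v, Sum.inr e) ∈ P := fun ⟨v, hv⟩ => pm_not_both hP hv hm
    rw [hdef]
    dsimp only
    rw [dif_neg hnm]
    have hspec := (pm_partner hP hnm).choose_spec
    have hw := (hshared hspec.2).choose_spec
    have hff : (pm_partner hP hnm).choose = f := pm_partner_unique hP hspec.2 hm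
    exact ⟨hw.1, hff ▸ hw.2⟩
  have hmem : ∀ e : H.edgeSet, h e ∈ (e : Sym2 V) := by
    intro e
    by_cases hm : ∃ v, s(Sum.inl v, Sum.inr e) ∈ P
    · obtain ⟨v, hv⟩ := hm
      rw [hmatched hv]
      exact (mg_adj_inl_inr H).mp ((SimpleGraph.mem_edgeSet _).mp (hP.1 hv))
    · obtain ⟨f, hef, hfP⟩ := pm_partner hP hm
      exact (hpaired hfP).1
  have hgh : ∀ v, h (g v) = v := fun v => hmatched (hg v)
  have hswap : ∀ {e f : H.edgeSet}, s(Sum.inr e, Sum.inr f) ∈ P →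
      s(Sum.inr f, Sum.inr e) ∈ P := by
    intro e f hm
    rwa [Sym2.eq_swap] at hm
  have hheads : ∀ {e f : H.edgeSet}, s(Sum.inr e, Sum.inr f) ∈ P → h e = h f := by
    intro e f hm
    have h1 := hpaired hm
    have h2 := hpaired (hswap hm)
    have hne : (e : Sym2 V) ≠ (f : Sym2 V) := fun hc => (hedne hm) (Subtype.ext hc)
    exact shared_unique hne h1.1 h1.2 h2.2 h2.1
  have hmeg : ∀ {v : V} {e : H.edgeSet}, s(Sum.inl v, Sum.inr e) ∈ P → g v = e :=
    fun {v e} hm => pm_matchV_unique hP (hg v) hm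
  have hodd : ∀ v, Odd (indeg H h v) := by
    intro v
    have hgS : g v ∈ univ.filter (fun e : H.edgeSet => h e = v) :=
      mem_filter.mpr ⟨mem_univ _, hgh v⟩
    set T := (univ.filter (fun e : H.edgeSet => h e = v)).erase (g v) with hTdef
    have hST : indeg H h v = #T + 1 := by
      rw [indeg, hTdef, Finset.card_erase_of_mem hgS]
      have : 0 < #(univ.filter (fun e : H.edgeSet => h e = v)) := card_pos.mpr ⟨_, hgS⟩
      omega
    have hpartners : ∀ e ∈ T, ∃ f ∈ T, f ≠ e ∧ s(Sum.inr e, Sum.inr f) ∈ P := by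
      intro e heT
      obtain ⟨hne_g, heS⟩ := Finset.mem_erase.mp heT
      have hhe : h e = v := (mem_filter.mp heS).2
      have hnm : ¬∃ u, s(Sum.inl u, Sum.inr e) ∈ P := by
        rintro ⟨u, hu⟩
        have h1 : h e = u := hmatched hu
        have h2 : g u = e := hmeg hu
        have huv : u = v := by rw [← h1, hhe]
        exact hne_g (by rw [← h2, huv])
      obtain ⟨f, hef, hefP⟩ := pm_partner hP hnm
      have hf_head : h f = v := by rw [← hheads hefP, hhe]
      have hf_ne_g : f ≠ g v := by
        intro hfg
        have h1 : s(Sum.inl v, Sum.inr f) ∈ P := by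
          have := hg v
          rwa [← hfg] at this
        exact pm_not_both hP h1 (hswap hefP)
      exact ⟨f, Finset.mem_erase.mpr ⟨hf_ne_g, mem_filter.mpr ⟨mem_univ _, hf_head⟩⟩,
        Ne.symm hef, hefP⟩
    have hT2 : #T ≤ 2 := by
      have h1 := le_trans (indeg_le_degree H h hmem v) (hdeg v)
      omega
    have hT1 : #T ≠ 1 := by
      intro h1
      obtain ⟨e, he⟩ := Finset.card_eq_one.mp h1
      obtain ⟨f, hfT, hfe, _⟩ := hpartners e (he ▸ Finset.mem_singleton_self e)
      rw [he, Finset.mem_singleton] at hfT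
      exact hfe hfT
    rcases (by omega : #T = 0 ∨ #T = 2) with h0 | h0 <;> rw [hST, h0] <;> decide
  refine ⟨h, g, hmem, hodd, hgh, ?_⟩
  ext p
  constructor
  · rintro (⟨v, rfl⟩ | ⟨e, f, hef, hhef, hge, hgf, rfl⟩)
    · exact hg v
    · have hnm : ¬∃ u, s(Sum.inl u, Sum.inr e) ∈ P := by
        rintro ⟨u, hu⟩
        exact hge (by rw [hmatched hu, hmeg hu])
      obtain ⟨f0, hef0, hP0⟩ := pm_partner hP hnm
      have hgf0 : f0 ≠ g (h e) := by
        intro hc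
        have h1 : s(Sum.inl (h e), Sum.inr f0) ∈ P := by
          have := hg (h e)
          rwa [← hc] at this
        exact pm_not_both hP h1 (hswap hP0)
      have hf0 : f = f0 := by
        refine head_three_unique hdeg h hmem (hgh (h e)) rfl hhef.symm
          (hheads hP0).symm (Ne.symm hge) (Ne.symm hgf) hgf0 hef hef0
      rw [hf0]
      exact hP0
  · intro hpP
    rcases mg_edge_shape H (hP.1 hpP) with ⟨v, e, _, rfl⟩ | ⟨e, f, hef, _, rfl⟩
    · exact Or.inl ⟨v, by rw [hmeg hpP]⟩
    · refine Or.inr ⟨e, f, hef, hheads hpP, ?_, ?_, rfl⟩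
      · intro hgeq
        have h1 : s(Sum.inl (h e), Sum.inr e) ∈ P := by
          have := hg (h e)
          rwa [hgeq] at this
        exact pm_not_both hP h1 hpP
      · intro hgeq
        have h1 : s(Sum.inl (h e), Sum.inr f) ∈ P := by
          have := hg (h e)
          rwa [hgeq] at this
        exact pm_not_both hP h1 (hswap hpP)


variable (H)

noncomputable def encodeFun (hdeg : ∀ v, H.degree v ≤ 3) :
    (Σ h : OHeadT H, ∀ v : V, {e : H.edgeSet // h.1.1 e = v}) →
      {Pp : Set (Sym2 (V ⊕ H.edgeSet)) // IsPerfMatchSet (middleGraph H) Pp} :=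
  fun x => ⟨encodeSet H x.1.1.1 (fun v => (x.2 v).1),
    encode_isPM x.1.1.1 _ x.1.1.2 x.1.2 hdeg (fun v => (x.2 v).2)⟩

lemma encode_inj (hdeg : ∀ v, H.degree v ≤ 3) : Function.Injective (encodeFun H hdeg) := by
  rintro ⟨h, g⟩ ⟨h', g'⟩ heq
  have hSeq : encodeSet H h.1.1 (fun v => (g v).1)
      = encodeSet H h'.1.1 (fun v => (g' v).1) := congrArg Subtype.val heq
  have hgv : ∀ v, (g v).1 = (g' v).1 := by
    intro v
    have hA : s(Sum.inl v, Sum.inr (g v).1) ∈ encodeSet H h'.1.1 (fun v => (g' v).1) := by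
      rw [← hSeq]
      exact Or.inl ⟨v, rfl⟩
    rcases hA with ⟨v', hv'⟩ | ⟨e, f, _, _, _, _, hpe⟩
    · rw [Sym2.eq_iff] at hv'
      rcases hv' with ⟨h1, h2⟩ | ⟨h1, h2⟩
      · obtain rfl : v = v' := by injection h1
        injection h2
      · exact absurd h1 Sum.inl_ne_inr
    · rw [Sym2.eq_iff] at hpe
      rcases hpe with ⟨h1, _⟩ | ⟨h1, _⟩ <;> exact absurd h1 Sum.inl_ne_inr
  have hh : h.1.1 = h'.1.1 := by
    funext e
    by_cases hcase : e = (g (h.1.1 e)).1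
    · have hx : h'.1.1 e = h.1.1 e := by
        conv_lhs => rw [show e = (g' (h.1.1 e)).1 from by rw [← hgv (h.1.1 e)]; exact hcase]
        exact (g' (h.1.1 e)).2
      exact hx.symm
    · obtain ⟨f, hfe, hff, _, hmemB⟩ := encode_partner h.1.1 (fun v => (g v).1)
        h.1.2 h.2 hdeg (fun v => (g v).2) e hcase
      rw [hSeq] at hmemB
      rcases hmemB with ⟨v', hv'⟩ | ⟨a, b, hab, hhab, _, _, hpe⟩
      · rw [Sym2.eq_iff] at hv'
        rcases hv' with ⟨h1, _⟩ | ⟨_, h1⟩ <;> exact absurd h1.symm Sum.inl_ne_inr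
      · rw [Sym2.eq_iff] at hpe
        have hh'ef : h'.1.1 e = h'.1.1 f := by
          rcases hpe with ⟨h1, h2⟩ | ⟨h1, h2⟩
          · obtain rfl : e = a := by injection h1
            obtain rfl : f = b := by injection h2
            exact hhab
          · obtain rfl : e = b := by injection h1
            obtain rfl : f = a := by injection h2
            exact hhab.symm
        have hne2 : (e : Sym2 V) ≠ (f : Sym2 V) := fun hc => hfe (Subtype.ext hc)
        have he1 : h.1.1 e ∈ (e : Sym2 V) := h.1.2 e
        have he2 : h.1.1 e ∈ (f : Sym2 V) := by rw [hff]; exact h.1.2 f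
        have he3 : h'.1.1 e ∈ (e : Sym2 V) := h'.1.2 e
        have he4 : h'.1.1 e ∈ (f : Sym2 V) := by rw [hh'ef]; exact h'.1.2 f
        exact shared_unique hne2 he1 he2 he3 he4
  have hOH : h = h' := Subtype.ext (Subtype.ext hh)
  subst hOH
  have hgg : g = g' := funext fun v => Subtype.ext (hgv v)
  rw [hgg]

lemma encode_surj (hdeg : ∀ v, H.degree v ≤ 3) : Function.Surjective (encodeFun H hdeg) := by
  rintro ⟨P, hP⟩
  obtain ⟨h, g, hmem, hodd, hgh, hEq⟩ := pm_decode hdeg hP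
  exact ⟨⟨⟨⟨h, hmem⟩, hodd⟩, fun v => ⟨g v, hgh v⟩⟩, Subtype.ext hEq⟩

lemma card_PM (hdeg : ∀ v, H.degree v ≤ 3) :
    Nat.card {Pp : Set (Sym2 (V ⊕ H.edgeSet)) // IsPerfMatchSet (middleGraph H) Pp}
      = Nat.card (Σ h : OHeadT H, ∀ v : V, {e : H.edgeSet // h.1.1 e = v}) :=
  (Nat.card_eq_of_bijective _ ⟨encode_inj H hdeg, encode_surj H hdeg⟩).symm

lemma card_choices (h : OHeadT H) :
    Nat.card (∀ v : V, {e : H.edgeSet // h.1.1 e = v}) = ∏ v, indeg H h.1.1 v := by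
  rw [Nat.card_pi]
  apply Finset.prod_congr rfl
  intro v _
  rw [Nat.card_eq_fintype_card, Fintype.card_subtype]
  rfl

lemma prod_indeg (hdeg : ∀ v, H.degree v ≤ 3) (h : OHeadT H) :
    ∏ v, indeg H h.1.1 v = 3 ^ ((Fintype.card H.edgeSet - Fintype.card V) / 2) := by
  have hcases := odd_indeg_cases H h.1.1 h.1.2 hdeg h.2
  set t := #(univ.filter fun v => indeg H h.1.1 v = 3) with htdef
  have hprod : ∏ v, indeg H h.1.1 v = 3 ^ t := by
    rw [← Finset.prod_filter_mul_prod_filter_not univ (fun v => indeg H h.1.1 v = 3)]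
    rw [Finset.prod_congr rfl (fun v hv => (mem_filter.mp hv).2), Finset.prod_const]
    have hone : ∀ v ∈ univ.filter (fun v => ¬indeg H h.1.1 v = 3), indeg H h.1.1 v = 1 := by
      intro v hv
      rcases hcases v with h1 | h1
      · exact h1
      · exact absurd h1 (mem_filter.mp hv).2
    rw [Finset.prod_congr rfl hone, Finset.prod_const, one_pow, mul_one]
  have hsum := sum_indeg H h.1.1
  have hsum2 : ∑ v, indeg H h.1.1 v = 3 * t + (Fintype.card V - t) := by
    rw [← Finset.sum_filter_add_sum_filter_not univ (fun v => indeg H h.1.1 v = 3)]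
    have h1 : ∑ v ∈ univ.filter (fun v => indeg H h.1.1 v = 3), indeg H h.1.1 v = 3 * t := by
      rw [Finset.sum_congr rfl (fun v hv => (mem_filter.mp hv).2), Finset.sum_const,
        smul_eq_mul, mul_comm]
    have hone : ∀ v ∈ univ.filter (fun v => ¬indeg H h.1.1 v = 3), indeg H h.1.1 v = 1 := by
      intro v hv
      rcases hcases v with hh | hh
      · exact hh
      · exact absurd hh (mem_filter.mp hv).2
    have h2 : ∑ v ∈ univ.filter (fun v => ¬indeg H h.1.1 v = 3), indeg H h.1.1 v
        = Fintype.card V - t := by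
      rw [Finset.sum_congr rfl hone, Finset.sum_const, smul_eq_mul, mul_one,
        Finset.filter_not, Finset.card_sdiff_of_subset (Finset.filter_subset _ _), Finset.card_univ]
    rw [h1, h2]
  have ht : t ≤ Fintype.card V := by
    rw [← Finset.card_univ]
    exact Finset.card_filter_le _ _
  have hteq : t = (Fintype.card H.edgeSet - Fintype.card V) / 2 := by omega
  rw [hprod, hteq]

lemma key_count [Nonempty V] (hc : H.Preconnected) (hdeg : ∀ v, H.degree v ≤ 3)
    (hpar : Even (Fintype.card H.edgeSet + Fintype.card V)) :
    Nat.card {Pp : Set (Sym2 (V ⊕ H.edgeSet)) // IsPerfMatchSet (middleGraph H) Pp}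
      = 2 ^ (Fintype.card H.edgeSet + 1 - Fintype.card V) *
        3 ^ ((Fintype.card H.edgeSet - Fintype.card V) / 2) := by
  rw [card_PM H hdeg, Nat.card_eq_fintype_card, Fintype.card_sigma]
  have hterm : ∀ h : OHeadT H,
      Fintype.card (∀ v : V, {e : H.edgeSet // h.1.1 e = v})
        = 3 ^ ((Fintype.card H.edgeSet - Fintype.card V) / 2) := by
    intro h
    rw [← Nat.card_eq_fintype_card, card_choices, prod_indeg H hdeg h]
  rw [Finset.sum_congr rfl (fun h _ => hterm h), Finset.sum_const, smul_eq_mul,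
    Finset.card_univ, ← Nat.card_eq_fintype_card, card_OHead H hc hpar]

end MGPM

namespace MGPM

variable [Fintype V] [DecidableEq V]

theorem key (H : SimpleGraph V) [DecidableRel H.Adj] [Nonempty V] (hc : H.Preconnected)
    (hdeg : ∀ v, H.degree v ≤ 3)
    (hpar : Even (Fintype.card H.edgeSet + Fintype.card V)) :
    pmCount (middleGraph H) = 2 ^ (Fintype.card H.edgeSet + 1 - Fintype.card V) *
      3 ^ ((Fintype.card H.edgeSet - Fintype.card V) / 2) := by
  have h0 : pmCount (middleGraph H)
      = Nat.card {Pp : Set (Sym2 (V ⊕ H.edgeSet)) // IsPerfMatchSet (middleGraph H) Pp} :=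
    (Nat.card_coe_set_eq _).symm
  rw [h0, key_count H hc hdeg hpar]


end MGPM

open MGPM in
/-- If `G` is a connected cubic graph with `n` vertices and `m = 3n/2`
edges, `m` odd, and `e` is a non-cut edge of `G`, then
`p(M(G - e)) = 2^(m-n) · 3^((2n-m-1)/2) = 2^(n/2) · 3^((n-2)/4)`. -/
theorem middle_graph_pm_cubic_odd_noncut {V : Type*} [Fintype V] [DecidableEq V]
    (G : SimpleGraph V) [DecidableRel G.Adj]
    (hconn : G.Connected) (hcubic : G.IsRegularOfDegree 3)
    (hodd : Odd G.edgeFinset.card)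
    (e : Sym2 V) (he : e ∈ G.edgeSet) (hnc : (G.deleteEdges {e}).Connected) :
    pmCount (middleGraph (G.deleteEdges {e})) =
        2 ^ (G.edgeFinset.card - Fintype.card V) *
          3 ^ ((2 * Fintype.card V - G.edgeFinset.card - 1) / 2) ∧
      pmCount (middleGraph (G.deleteEdges {e})) =
        2 ^ (Fintype.card V / 2) * 3 ^ ((Fintype.card V - 2) / 4) := by
  haveI : Nonempty V := hconn.nonempty
  set n := Fintype.card V with hndef
  set m := G.edgeFinset.card with hmdef
  have hhs : 2 * m = 3 * n := by
    have h1 := G.sum_degrees_eq_twice_card_edges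
    rw [Finset.sum_congr rfl (fun v _ => hcubic v), Finset.sum_const, smul_eq_mul,
      Finset.card_univ] at h1
    omega
  have hm1 : 1 ≤ m := Finset.card_pos.mpr ⟨e, SimpleGraph.mem_edgeFinset.mpr he⟩
  have hoddm : m % 2 = 1 := Nat.odd_iff.mp hodd
  set H := G.deleteEdges {e} with hHdef
  haveI instH : DecidableRel H.Adj := fun a b =>
    decidable_of_iff (G.Adj a b ∧ ¬(s(a, b) = e)) (by
      rw [hHdef, SimpleGraph.deleteEdges_adj]
      simp)
  have hedge : Fintype.card H.edgeSet = m - 1 := by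
    rw [← Nat.card_eq_fintype_card, Nat.card_coe_set_eq, hHdef,
      SimpleGraph.edgeSet_deleteEdges, Set.ncard_diff_singleton_of_mem he]
    congr 1
    rw [Set.ncard_eq_toFinset_card', Set.toFinset_card, ← SimpleGraph.edgeFinset_card]
  have hdeg : ∀ v, H.degree v ≤ 3 := by
    intro v
    rw [← hcubic v]
    apply Finset.card_le_card
    intro u hu
    rw [SimpleGraph.mem_neighborFinset] at hu ⊢
    rw [hHdef, SimpleGraph.deleteEdges_adj] at hu
    exact hu.1
  have hpar : Even (Fintype.card H.edgeSet + Fintype.card V) := by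
    rw [hedge, Nat.even_iff, ← hndef]
    omega
  have hkey := key H hnc.preconnected hdeg hpar
  rw [hedge, ← hndef] at hkey
  constructor
  · rw [hkey]
    have e1 : m - 1 + 1 - n = m - n := by omega
    have e2 : (m - 1 - n) / 2 = (2 * n - m - 1) / 2 := by omega
    rw [e1, e2]
  · rw [hkey]
    have e1 : m - 1 + 1 - n = n / 2 := by omega
    have e2 : (m - 1 - n) / 2 = (n - 2) / 4 := by omega
    rw [e1, e2]
end

section
/- Let G be a connected cubic simple graph with n vertices and m = 3n/2 edges, m even, and let N be a perfect matching of the line graph L(G). Regard each element of N as a pair {e, f} of edges of G sharing an endpoint, hence as an edge of M(G) between two e-vertices. Then: (i) each pair {e, f} ∈ N lies in exactly one of the K4-subgraphs G_v of M(G), namely for the unique common endpoint v of e and f; (ii) each subgraph G_v contains at most one edge of N; and (iii) exactly m/2 = 3n/4 of the n subgraphs G_v contain exactly one edge of N, while the remaining n/4 contain none. -/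
variable {V : Type*}

/-- Let `G` be a connected cubic graph with `n` vertices and `m = 3n/2`
edges, `m` even, and let `N` be a perfect matching of the line graph `L(G)`.  Then:
(i) every pair `{e,f} ∈ N` lies in exactly one `K₄`-subgraph `G_v` of `M(G)`, namely for
the unique common endpoint `v` of `e` and `f`; (ii) each `G_v` contains at most one edge
of `N`; (iii) exactly `m/2 = 3n/4` of the `G_v` contain exactly one edge of `N` and the
remaining `n/4` contain none. -/
theorem line_graph_pm_K4_distribution {V : Type*} [Fintype V] [DecidableEq V]
    (G : SimpleGraph V) [DecidableRel G.Adj]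
    (hconn : G.Connected) (hcubic : G.IsRegularOfDegree 3)
    (heven : Even G.edgeFinset.card)
    (N : Set (Sym2 G.edgeSet)) (hN : IsPerfMatchSet (lineGraph G) N) :
    (∀ e f : G.edgeSet, s(e, f) ∈ N →
        ∃! v : V, v ∈ (e : Sym2 V) ∧ v ∈ (f : Sym2 V)) ∧
    (∀ v : V, {p ∈ N | ∀ x ∈ p, v ∈ (x : Sym2 V)}.ncard ≤ 1) ∧
    {v : V | {p ∈ N | ∀ x ∈ p, v ∈ (x : Sym2 V)}.ncard = 1}.ncard =
      3 * Fintype.card V / 4 ∧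
    {v : V | {p ∈ N | ∀ x ∈ p, v ∈ (x : Sym2 V)}.ncard = 0}.ncard =
      Fintype.card V / 4 := by
  classical
  obtain ⟨hNsub, hNdisj, hNcov⟩ := hN
  haveI : Nonempty V := hconn.nonempty
  -- two distinct edges share at most one endpoint
  have huniq : ∀ (e f : G.edgeSet), e ≠ f → ∀ v w : V, v ∈ (e : Sym2 V) → v ∈ (f : Sym2 V) →
      w ∈ (e : Sym2 V) → w ∈ (f : Sym2 V) → v = w := by
    intro e f hef v w hve hvf hwe hwf
    by_contra hvw
    exact hef (Subtype.ext (((Sym2.mem_and_mem_iff hvw).1 ⟨hve, hwe⟩).trans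
      (((Sym2.mem_and_mem_iff hvw).1 ⟨hvf, hwf⟩).symm)))
  -- decomposition of elements of N
  have hedge : ∀ p ∈ N, ∃ e f : G.edgeSet, p = s(e, f) ∧ e ≠ f ∧
      ∃ v, v ∈ (e : Sym2 V) ∧ v ∈ (f : Sym2 V) := by
    intro p hp
    have h := hNsub hp
    clear hp
    revert h
    induction p using Sym2.ind with
    | _ e f =>
      intro h
      rw [SimpleGraph.mem_edgeSet] at h
      have h : e ≠ f ∧ ∃ v, v ∈ (e : Sym2 V) ∧ v ∈ (f : Sym2 V) := h
      exact ⟨e, f, rfl, h.1, h.2⟩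
  -- core of (ii): at most one element of N has all members through v
  have hone : ∀ (v : V) (p : Sym2 G.edgeSet), p ∈ N → (∀ x ∈ p, v ∈ (x : Sym2 V)) →
      ∀ q ∈ N, (∀ x ∈ q, v ∈ (x : Sym2 V)) → p = q := by
    intro v p hp hpv q hq hqv
    by_contra hpq
    obtain ⟨e, f, rfl, hef, -⟩ := hedge p hp
    obtain ⟨e', f', rfl, he'f', -⟩ := hedge q hq
    have hdisj := hNdisj _ hp _ hq hpq
    have he2 := hdisj e (Sym2.mem_mk_left _ _)
    have hf2 := hdisj f (Sym2.mem_mk_right _ _)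
    rw [Sym2.mem_iff, not_or] at he2 hf2
    have c1 : (e : Sym2 V) ≠ (f : Sym2 V) := fun h => hef (Subtype.ext h)
    have c2 : (e : Sym2 V) ≠ (e' : Sym2 V) := fun h => he2.1 (Subtype.ext h)
    have c3 : (e : Sym2 V) ≠ (f' : Sym2 V) := fun h => he2.2 (Subtype.ext h)
    have c4 : (f : Sym2 V) ≠ (e' : Sym2 V) := fun h => hf2.1 (Subtype.ext h)
    have c5 : (f : Sym2 V) ≠ (f' : Sym2 V) := fun h => hf2.2 (Subtype.ext h)
    have c6 : (e' : Sym2 V) ≠ (f' : Sym2 V) := fun h => he'f' (Subtype.ext h)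
    have hsub : ({(e : Sym2 V), (f : Sym2 V), (e' : Sym2 V), (f' : Sym2 V)} : Finset (Sym2 V))
        ⊆ G.incidenceFinset v := by
      intro x hx
      rw [SimpleGraph.mem_incidenceFinset]
      simp only [Finset.mem_insert, Finset.mem_singleton] at hx
      rcases hx with rfl | rfl | rfl | rfl
      · exact ⟨e.2, hpv e (Sym2.mem_mk_left _ _)⟩
      · exact ⟨f.2, hpv f (Sym2.mem_mk_right _ _)⟩
      · exact ⟨e'.2, hqv e' (Sym2.mem_mk_left _ _)⟩
      · exact ⟨f'.2, hqv f' (Sym2.mem_mk_right _ _)⟩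
    have hcard : ({(e : Sym2 V), (f : Sym2 V), (e' : Sym2 V), (f' : Sym2 V)} :
        Finset (Sym2 V)).card = 4 := by
      rw [Finset.card_insert_of_notMem (by simp [c1, c2, c3]),
        Finset.card_insert_of_notMem (by simp [c4, c5]),
        Finset.card_pair c6]
    have hle := Finset.card_le_card hsub
    rw [hcard, SimpleGraph.card_incidenceFinset_eq_degree, hcubic v] at hle
    omega
  -- part (i)
  have part1 : ∀ e f : G.edgeSet, s(e, f) ∈ N →
      ∃! v : V, v ∈ (e : Sym2 V) ∧ v ∈ (f : Sym2 V) := by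
    intro e f hmem
    have h := hNsub hmem
    rw [SimpleGraph.mem_edgeSet] at h
    have h : e ≠ f ∧ ∃ v, v ∈ (e : Sym2 V) ∧ v ∈ (f : Sym2 V) := h
    obtain ⟨hef, v, hv1, hv2⟩ := h
    exact ⟨v, ⟨hv1, hv2⟩, fun w hw => huniq e f hef w v hw.1 hw.2 hv1 hv2⟩
  -- part (ii)
  have hle1 : ∀ v : V, {p ∈ N | ∀ x ∈ p, v ∈ (x : Sym2 V)}.ncard ≤ 1 := by
    intro v
    rw [Set.ncard_le_one (Set.toFinite _)]
    rintro p ⟨hp, hpv⟩ q ⟨hq, hqv⟩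
    exact hone v p hp hpv q hq hqv
  -- common vertex function
  have hcvex : ∀ p ∈ N, ∃ w : V, ∀ x ∈ p, w ∈ (x : Sym2 V) := by
    intro p hp
    obtain ⟨e, f, rfl, hef, v, hv1, hv2⟩ := hedge p hp
    refine ⟨v, fun x hx => ?_⟩
    rcases Sym2.mem_iff.1 hx with rfl | rfl
    · exact hv1
    · exact hv2
  choose cv' hcv' using hcvex
  set cv : Sym2 G.edgeSet → V :=
    fun p => if h : p ∈ N then cv' p h else Classical.arbitrary V with hcvdef
  have hcv : ∀ p (hp : p ∈ N), ∀ x ∈ p, cv p ∈ (x : Sym2 V) := by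
    intro p hp x hx
    simp only [hcvdef, dif_pos hp]
    exact hcv' p hp x hx
  have hinj : Set.InjOn cv N := by
    intro p hp q hq hpq
    exact hone (cv p) p hp (hcv p hp) q hq (by rw [hpq]; exact hcv q hq)
  have himg : {v : V | {p ∈ N | ∀ x ∈ p, v ∈ (x : Sym2 V)}.ncard = 1} = cv '' N := by
    ext v
    simp only [Set.mem_setOf_eq, Set.mem_image]
    constructor
    · intro h1
      have hne : {p ∈ N | ∀ x ∈ p, v ∈ (x : Sym2 V)}.Nonempty :=
        (Set.ncard_pos (Set.toFinite _)).1 (by omega)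
      obtain ⟨p, hp, hpv⟩ := hne
      refine ⟨p, hp, ?_⟩
      obtain ⟨e, f, rfl, hef, -⟩ := hedge p hp
      exact huniq e f hef (cv s(e, f)) v
        (hcv _ hp e (Sym2.mem_mk_left _ _)) (hcv _ hp f (Sym2.mem_mk_right _ _))
        (hpv e (Sym2.mem_mk_left _ _)) (hpv f (Sym2.mem_mk_right _ _))
    · rintro ⟨p, hp, rfl⟩
      have hmem : p ∈ {q ∈ N | ∀ x ∈ q, cv p ∈ (x : Sym2 V)} := ⟨hp, hcv p hp⟩
      have h1 := hle1 (cv p)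
      have h0 := (Set.ncard_pos (Set.toFinite _)).2 ⟨p, hmem⟩
      omega
  -- counting N via fibers
  choose g hg1 hg2 using hNcov
  have hNfin : N.Finite := Set.toFinite N
  have hfib : Fintype.card G.edgeSet =
      ∑ p ∈ hNfin.toFinset, (Finset.univ.filter (fun w => g w = p)).card := by
    rw [← Finset.card_univ]
    exact Finset.card_eq_sum_card_fiberwise (fun w _ => hNfin.mem_toFinset.2 (hg1 w))
  have hfib2 : ∀ p ∈ hNfin.toFinset, (Finset.univ.filter (fun w => g w = p)).card = 2 := by
    intro p hp
    rw [Set.Finite.mem_toFinset] at hp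
    obtain ⟨e, f, rfl, hef, -⟩ := hedge p hp
    have hset : Finset.univ.filter (fun w => g w = s(e, f)) = {e, f} := by
      ext w
      simp only [Finset.mem_filter, Finset.mem_univ, true_and, Finset.mem_insert,
        Finset.mem_singleton]
      constructor
      · intro h
        have hw := hg2 w
        rw [h] at hw
        exact Sym2.mem_iff.1 hw
      · intro h
        have hw : w ∈ (s(e, f) : Sym2 G.edgeSet) := Sym2.mem_iff.2 h
        by_contra hne
        exact hNdisj _ (hg1 w) _ hp hne w (hg2 w) hw
    rw [hset, Finset.card_pair hef]
  have hcardN : Fintype.card G.edgeSet = 2 * N.ncard := by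
    rw [hfib, Finset.sum_congr rfl hfib2, Finset.sum_const, smul_eq_mul,
      ← Set.ncard_eq_toFinset_card N hNfin, mul_comm]
  -- degree sum formula
  have hdeg : 3 * Fintype.card V = 2 * G.edgeFinset.card := by
    rw [← G.sum_degrees_eq_twice_card_edges,
      Finset.sum_congr rfl (fun v _ => hcubic v), Finset.sum_const,
      Finset.card_univ, smul_eq_mul, mul_comm]
  have hm : G.edgeFinset.card = Fintype.card G.edgeSet := SimpleGraph.edgeFinset_card
  have hA : {v : V | {p ∈ N | ∀ x ∈ p, v ∈ (x : Sym2 V)}.ncard = 1}.ncard = N.ncard := by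
    rw [himg]
    exact Set.ncard_image_of_injOn hinj
  have hsum := Set.ncard_add_ncard_compl
    {v : V | {p ∈ N | ∀ x ∈ p, v ∈ (x : Sym2 V)}.ncard = 1} (Set.toFinite _) (Set.toFinite _)
  rw [Nat.card_eq_fintype_card] at hsum
  have hcompl : {v : V | {p ∈ N | ∀ x ∈ p, v ∈ (x : Sym2 V)}.ncard = 0} =
      {v : V | {p ∈ N | ∀ x ∈ p, v ∈ (x : Sym2 V)}.ncard = 1}ᶜ := by
    ext v
    simp only [Set.mem_setOf_eq, Set.mem_compl_iff]
    have := hle1 v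
    omega
  refine ⟨part1, hle1, by omega, ?_⟩
  rw [hcompl]
  omega
end

section
/- Let G be a connected cubic simple graph with n vertices and m = 3n/2 edges, m even. Then every perfect matching of M(G) is of the form M'_N ∪ M for some perfect matching N of the line graph L(G) and some perfect matching M of the union of the subgraphs G_v containing no edge of N, where M'_N = { {v, e3} : v ∈ V(G) such that G_v contains the edge {e1, e2} of N, with e3 the third edge incident to v }. Equivalently, the set of all perfect matchings of M(G) is the union over all perfect matchings N of L(G) of the families M_N* = { M'_N ∪ M }. -/
variable {V : Type*}

/-- For a vertex `v` of `G`, the set of vertices of the middle graph `M(G)` consisting of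
the `v`-vertex `v` together with the `e`-vertices corresponding to the edges of `G`
incident with `v`.  For a cubic graph this induces a `K₄` in `M(G)`, denoted `G_v`. -/
def K4set (G : SimpleGraph V) (v : V) : Set (V ⊕ G.edgeSet) :=
  {a | a = Sum.inl v ∨ ∃ e : G.edgeSet, v ∈ (e : Sym2 V) ∧ a = Sum.inr e}

/-- Given a set `N` of edges of the line graph of `G`, the set of vertices `v` of `G`
such that the `K₄`-subgraph `G_v` of `M(G)` contains no edge of `N`, i.e. no member of
`N` has both endpoints incident with `v`. -/
def badSet (G : SimpleGraph V) (N : Set (Sym2 G.edgeSet)) : Set V :=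
  {v | ∀ p ∈ N, ¬ ∀ x ∈ p, v ∈ (x : Sym2 V)}

/-- Given a set `N` of edges of the line graph of `G`, the set `M'_N` of those edges of
`M(G)` of the form `{v, e₃}` where the `K₄`-subgraph `G_v` contains an edge `{e₁, e₂}`
of `N` and `e₃` is the third edge of `G` incident with `v`. -/
def matchEdges (G : SimpleGraph V) (N : Set (Sym2 G.edgeSet)) :
    Set (Sym2 (V ⊕ G.edgeSet)) :=
  {p | ∃ (v : V) (e1 e2 e3 : G.edgeSet), s(e1, e2) ∈ N ∧
    v ∈ (e1 : Sym2 V) ∧ v ∈ (e2 : Sym2 V) ∧ v ∈ (e3 : Sym2 V) ∧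
    e3 ≠ e1 ∧ e3 ≠ e2 ∧ p = s(Sum.inl v, Sum.inr e3)}

/-- The family `M_N*` of perfect matchings of `M(G)` of the form `M'_N ∪ M`, where `M`
ranges over the perfect matchings of the union of the `K₄`-subgraphs `G_v` containing
no edge of `N`. -/
def MNstar (G : SimpleGraph V) (N : Set (Sym2 G.edgeSet)) :
    Set (Set (Sym2 (V ⊕ G.edgeSet))) :=
  {P | ∃ M : Set (Sym2 (V ⊕ G.edgeSet)),
    (∀ p ∈ M, p ∈ (middleGraph G).edgeSet ∧ ∃ v ∈ badSet G N, ∀ a ∈ p, a ∈ K4set G v) ∧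
    (∀ p ∈ M, ∀ q ∈ M, p ≠ q → ∀ a, a ∈ p → a ∉ q) ∧
    (∀ v ∈ badSet G N, ∀ a ∈ K4set G v, ∃ p ∈ M, a ∈ p) ∧
    P = matchEdges G N ∪ M}

set_option linter.unusedSectionVars false
set_option maxHeartbeats 1000000

section Aux
variable {V : Type*} [Fintype V] [DecidableEq V] (G : SimpleGraph V) [DecidableRel G.Adj]

lemma aux_share {e f : G.edgeSet} {u w : V} (hef : e ≠ f) (hue : u ∈ (e : Sym2 V))
    (huf : u ∈ (f : Sym2 V)) (hwe : w ∈ (e : Sym2 V)) (hwf : w ∈ (f : Sym2 V)) : u = w := by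
  by_contra h
  have he : (e : Sym2 V) = s(u, w) := (Sym2.mem_and_mem_iff h).mp ⟨hue, hwe⟩
  have hf : (f : Sym2 V) = s(u, w) := (Sym2.mem_and_mem_iff h).mp ⟨huf, hwf⟩
  exact hef (Subtype.ext (he.trans hf.symm))

lemma aux_other {e : G.edgeSet} {v : V} (hv : v ∈ (e : Sym2 V)) :
    ∃ u : V, u ≠ v ∧ u ∈ (e : Sym2 V) := by
  obtain ⟨u, hu⟩ := Sym2.mem_iff_exists.mp hv
  have hadj : G.Adj v u := by
    have := e.2
    rw [hu] at this
    exact this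
  exact ⟨u, fun h => G.ne_of_adj hadj h.symm, by rw [hu]; exact Sym2.mem_mk_right _ _⟩

lemma aux_deg3 (hcubic : G.IsRegularOfDegree 3) (v : V) {e1 e2 e3 e : G.edgeSet}
    (h1 : v ∈ (e1 : Sym2 V)) (h2 : v ∈ (e2 : Sym2 V)) (h3 : v ∈ (e3 : Sym2 V))
    (h12 : e1 ≠ e2) (h13 : e1 ≠ e3) (h23 : e2 ≠ e3) (he : v ∈ (e : Sym2 V)) :
    e = e1 ∨ e = e2 ∨ e = e3 := by
  classical
  have hmem : ∀ f : G.edgeSet, v ∈ (f : Sym2 V) → (f : Sym2 V) ∈ G.incidenceFinset v := by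
    intro f hf
    rw [SimpleGraph.mem_incidenceFinset]
    exact ⟨f.2, hf⟩
  have hsub : ({(e1 : Sym2 V), (e2 : Sym2 V), (e3 : Sym2 V)} : Finset (Sym2 V)) ⊆
      G.incidenceFinset v := by
    intro x hx
    simp only [Finset.mem_insert, Finset.mem_singleton] at hx
    rcases hx with rfl | rfl | rfl
    exacts [hmem e1 h1, hmem e2 h2, hmem e3 h3]
  have hc1 : (e1 : Sym2 V) ≠ (e2 : Sym2 V) := fun h => h12 (Subtype.ext h)
  have hc2 : (e1 : Sym2 V) ≠ (e3 : Sym2 V) := fun h => h13 (Subtype.ext h)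
  have hc3 : (e2 : Sym2 V) ≠ (e3 : Sym2 V) := fun h => h23 (Subtype.ext h)
  have hcard : ({(e1 : Sym2 V), (e2 : Sym2 V), (e3 : Sym2 V)} : Finset (Sym2 V)).card = 3 := by
    rw [Finset.card_insert_of_notMem (by simp [hc1, hc2]),
      Finset.card_insert_of_notMem (by simp [hc3]), Finset.card_singleton]
  have hcard2 : (G.incidenceFinset v).card = 3 := by
    rw [SimpleGraph.card_incidenceFinset_eq_degree]; exact hcubic v
  have heq : ({(e1 : Sym2 V), (e2 : Sym2 V), (e3 : Sym2 V)} : Finset (Sym2 V)) =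
      G.incidenceFinset v :=
    Finset.eq_of_subset_of_card_le hsub (by rw [hcard, hcard2])
  have : (e : Sym2 V) ∈ ({(e1 : Sym2 V), (e2 : Sym2 V), (e3 : Sym2 V)} : Finset (Sym2 V)) := by
    rw [heq]; exact hmem e he
  simp only [Finset.mem_insert, Finset.mem_singleton] at this
  rcases this with h | h | h
  exacts [Or.inl (Subtype.ext h), Or.inr (Or.inl (Subtype.ext h)),
    Or.inr (Or.inr (Subtype.ext h))]

lemma aux_two (hcubic : G.IsRegularOfDegree 3) (v : V) (f : G.edgeSet)
    (hf : v ∈ (f : Sym2 V)) :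
    ∃ e1 e2 : G.edgeSet, v ∈ (e1 : Sym2 V) ∧ v ∈ (e2 : Sym2 V) ∧ e1 ≠ e2 ∧ e1 ≠ f ∧ e2 ≠ f := by
  classical
  have hcard2 : (G.incidenceFinset v).card = 3 := by
    rw [SimpleGraph.card_incidenceFinset_eq_degree]; exact hcubic v
  have hfm : (f : Sym2 V) ∈ G.incidenceFinset v := by
    rw [SimpleGraph.mem_incidenceFinset]; exact ⟨f.2, hf⟩
  have hcard3 : ((G.incidenceFinset v).erase (f : Sym2 V)).card = 2 := by
    rw [Finset.card_erase_of_mem hfm, hcard2]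
  have h1lt : 1 < ((G.incidenceFinset v).erase (f : Sym2 V)).card := by omega
  obtain ⟨a, ha, b, hb, hab⟩ := Finset.one_lt_card.mp h1lt
  have ha' := Finset.mem_of_mem_erase ha
  have hb' := Finset.mem_of_mem_erase hb
  rw [SimpleGraph.mem_incidenceFinset] at ha' hb'
  refine ⟨⟨a, ha'.1⟩, ⟨b, hb'.1⟩, ha'.2, hb'.2, ?_, ?_, ?_⟩
  · exact fun h => hab (congrArg Subtype.val h)
  · exact fun h => (Finset.ne_of_mem_erase ha) (congrArg Subtype.val h)
  · exact fun h => (Finset.ne_of_mem_erase hb) (congrArg Subtype.val h)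

/-- `v` is a "pair vertex" for `P`: two distinct edges of `G` through `v` are matched to
each other in `P`. -/
def IsPairVtx (G : SimpleGraph V) (P : Set (Sym2 (V ⊕ G.edgeSet))) (v : V) : Prop :=
  ∃ e f : G.edgeSet, v ∈ (e : Sym2 V) ∧ v ∈ (f : Sym2 V) ∧ e ≠ f ∧
    s(Sum.inr e, Sum.inr f) ∈ P

end Aux

/-- Let `G` be a connected cubic graph with `n` vertices and an even
number of edges.  Then every perfect matching of `M(G)` belongs to the family `M_N*` for
some perfect matching `N` of the line graph `L(G)`. -/
theorem middle_graph_pm_in_MNstar {V : Type*} [Fintype V] [DecidableEq V]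
    (G : SimpleGraph V) [DecidableRel G.Adj]
    (hconn : G.Connected) (hcubic : G.IsRegularOfDegree 3)
    (heven : Even G.edgeFinset.card) :
    ∀ P : Set (Sym2 (V ⊕ G.edgeSet)), IsPerfMatchSet (middleGraph G) P →
      ∃ N : Set (Sym2 G.edgeSet),
        IsPerfMatchSet (lineGraph G) N ∧ P ∈ MNstar G N := by
  classical
  intro P hP
  obtain ⟨hPE, hPdisj, hPcov⟩ := hP
  -- distinct members of P are disjoint, hence a vertex determines its member
  have huniq : ∀ p ∈ P, ∀ q ∈ P, ∀ a, a ∈ p → a ∈ q → p = q := by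
    intro p hp q hq a hap haq
    by_contra h
    exact hPdisj p hp q hq h a hap haq
  -- every vertex of G is matched in P to an incident edge
  have hσ0 : ∀ v : V, ∃ e : G.edgeSet, v ∈ (e : Sym2 V) ∧ s(Sum.inl v, Sum.inr e) ∈ P := by
    intro v
    obtain ⟨p, hp, hv⟩ := hPcov (Sum.inl v)
    have hpe := hPE hp
    revert hp hv hpe
    induction p using Sym2.ind with
    | _ a b =>
      intro hp hv hpe
      rw [SimpleGraph.mem_edgeSet] at hpe
      rw [Sym2.mem_iff] at hv
      rcases hv with rfl | rfl
      · cases b with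
        | inl u => exact hpe.elim
        | inr e => exact ⟨e, hpe, hp⟩
      · cases a with
        | inl u => exact hpe.elim
        | inr e => exact ⟨e, hpe, by rwa [Sym2.eq_swap]⟩
  choose σ hσ1 hσ2 using hσ0
  have hσuniq : ∀ (v : V), ∀ p ∈ P, Sum.inl v ∈ p → p = s(Sum.inl v, Sum.inr (σ v)) :=
    fun v p hp hvp => huniq p hp _ (hσ2 v) (Sum.inl v) hvp (Sym2.mem_mk_left _ _)
  have hσinj : ∀ u v, σ u = σ v → u = v := by
    intro u v h
    have h3 := huniq _ (hσ2 u) _ (hσ2 v) (Sum.inr (σ u)) (Sym2.mem_mk_right _ _)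
      (by rw [h]; exact Sym2.mem_mk_right _ _)
    rw [Sym2.eq_iff] at h3
    rcases h3 with ⟨h', _⟩ | ⟨h', _⟩
    · exact Sum.inl.inj h'
    · simp at h'
  -- classification of the members of P
  have hclass : ∀ p ∈ P, (∃ v : V, p = s(Sum.inl v, Sum.inr (σ v))) ∨
      (∃ (e f : G.edgeSet) (w : V), e ≠ f ∧ w ∈ (e : Sym2 V) ∧ w ∈ (f : Sym2 V) ∧
        s(Sum.inr e, Sum.inr f) ∈ P ∧ p = s(Sum.inr e, Sum.inr f)) := by
    intro p hp
    have hpe := hPE hp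
    revert hp hpe
    induction p using Sym2.ind with
    | _ a b =>
      intro hp hpe
      rw [SimpleGraph.mem_edgeSet] at hpe
      cases a with
      | inl u =>
        cases b with
        | inl w => exact hpe.elim
        | inr e => exact Or.inl ⟨u, hσuniq u _ hp (Sym2.mem_mk_left _ _)⟩
      | inr e =>
        cases b with
        | inl u => exact Or.inl ⟨u, hσuniq u _ hp (Sym2.mem_mk_right _ _)⟩
        | inr f =>
          obtain ⟨hef, w, hw1, hw2⟩ := hpe
          exact Or.inr ⟨e, f, w, hef, hw1, hw2, hp, rfl⟩
  -- an edge matched in P to another edge is not a σ-image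
  have hpairσ : ∀ (g h : G.edgeSet) (x : V), s(Sum.inr g, Sum.inr h) ∈ P → g ≠ σ x := by
    intro g h x hP' hgg
    have h3 := huniq _ hP' _ (hσ2 x) (Sum.inr g) (Sym2.mem_mk_left _ _)
      (by rw [hgg]; exact Sym2.mem_mk_right _ _)
    simp [Sym2.eq_iff] at h3
  have hL1 : ∀ (v : V) (g h : G.edgeSet), s(Sum.inr g, Sum.inr h) ∈ P →
      σ v ≠ g ∧ σ v ≠ h := by
    intro v g h hp
    refine ⟨fun hh => hpairσ g h v hp hh.symm, fun hh => hpairσ h g v ?_ hh.symm⟩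
    rwa [Sym2.eq_swap]
  -- helper to produce pair vertices
  have hPVmk : ∀ (x : V) (g h : G.edgeSet), x ∈ (g : Sym2 V) → x ∈ (h : Sym2 V) → g ≠ h →
      s(Sum.inr g, Sum.inr h) ∈ P → IsPairVtx G P x :=
    fun x g h h1 h2 h3 h4 => ⟨g, h, h1, h2, h3, h4⟩
  -- the two non-σ edges at each vertex
  have hτ0 : ∀ v : V, ∃ e1 e2 : G.edgeSet, v ∈ (e1 : Sym2 V) ∧ v ∈ (e2 : Sym2 V) ∧
      e1 ≠ e2 ∧ e1 ≠ σ v ∧ e2 ≠ σ v := fun v => aux_two G hcubic v (σ v) (hσ1 v)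
  choose τ1 τ2 hτ11 hτ21 hτne hτ1σ hτ2σ using hτ0
  have hcomp : ∀ (v : V) (e : G.edgeSet), v ∈ (e : Sym2 V) →
      e = σ v ∨ e = τ1 v ∨ e = τ2 v := by
    intro v e he
    exact aux_deg3 G hcubic v (hσ1 v) (hτ11 v) (hτ21 v) (fun h => hτ1σ v h.symm)
      (fun h => hτ2σ v h.symm) (hτne v) he
  have hKey : ∀ (u v : V), v ∈ (τ1 u : Sym2 V) → v ∈ (τ2 u : Sym2 V) → u = v := by
    intro u v h1 h2
    exact aux_share G (hτne u) (hτ11 u) (hτ21 u) h1 h2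
  set N : Set (Sym2 G.edgeSet) :=
    {p | ∃ v : V, ¬ IsPairVtx G P v ∧ p = s(τ1 v, τ2 v)} with hNdef
  -- an endpoint of an edge matched to another edge (away from the common vertex)
  -- is not a pair vertex
  have hgoodpt : ∀ (g h : G.edgeSet) (w x : V), g ≠ h → w ∈ (g : Sym2 V) →
      w ∈ (h : Sym2 V) → s(Sum.inr g, Sum.inr h) ∈ P → x ≠ w → x ∈ (g : Sym2 V) →
      ¬ IsPairVtx G P x := by
    rintro g h w x hgh hwg hwh hP' hxw hxg ⟨a, b, hxa, hxb, hab, hPab⟩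
    have hga : g ≠ a := by
      rintro rfl
      have h3 := huniq _ hP' _ hPab (Sum.inr g) (Sym2.mem_mk_left _ _) (Sym2.mem_mk_left _ _)
      rw [Sym2.eq_iff] at h3
      rcases h3 with ⟨_, hb⟩ | ⟨hh1, hh⟩
      · have hb' : h = b := Sum.inr.inj hb
        exact hxw (aux_share G hgh hxa (hb' ▸ hxb) hwg hwh)
      · first
          | exact hgh (Sum.inr.inj hh)
          | exact hgh (Sum.inr.inj hh).symm
          | exact hgh (Sum.inr.inj hh1)
          | exact hgh (Sum.inr.inj hh1).symm
          | simp_all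
    have hgb : g ≠ b := by
      rintro rfl
      have h3 := huniq _ hP' _ hPab (Sum.inr g) (Sym2.mem_mk_left _ _) (Sym2.mem_mk_right _ _)
      rw [Sym2.eq_iff] at h3
      rcases h3 with ⟨ha1, hh⟩ | ⟨hh2, hh'⟩
      · first
          | exact hgh (Sum.inr.inj hh)
          | exact hgh (Sum.inr.inj hh).symm
          | exact hgh (Sum.inr.inj ha1)
          | exact hgh (Sum.inr.inj ha1).symm
          | simp_all
      · have hh'' : h = a := Sum.inr.inj hh'
        exact hxw (aux_share G hgh hxb (hh'' ▸ hxa) hwg hwh)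
    have hσa := hL1 x a b hPab
    have hgσ : g ≠ σ x := hpairσ g h x hP'
    rcases aux_deg3 G hcubic x hxa hxb (hσ1 x) hab (fun hh => hσa.1 hh.symm)
      (fun hh => hσa.2 hh.symm) hxg with hh | hh | hh
    exacts [hga hh, hgb hh, hgσ hh]
  -- the other endpoint of a σ-image is not a pair vertex
  have hgoodpt2 : ∀ (v x : V), x ≠ v → x ∈ ((σ v : G.edgeSet) : Sym2 V) →
      ¬ IsPairVtx G P x := by
    rintro v x hxv hxe ⟨a, b, hxa, hxb, hab, hPab⟩
    have hσa := hL1 v a b hPab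
    have hσσ : σ v ≠ σ x := fun hh => hxv (hσinj v x hh).symm
    rcases aux_deg3 G hcubic x hxa hxb (hσ1 x) hab
      (fun hh => (hL1 x a b hPab).1 hh.symm) (fun hh => (hL1 x a b hPab).2 hh.symm) hxe
      with hh | hh | hh
    exacts [hσa.1 hh, hσa.2 hh, hσσ hh]
  -- if x is not a pair vertex and e ∋ x with e ≠ σ x, then e is covered by N
  have hNcov' : ∀ (x : V) (e : G.edgeSet), ¬ IsPairVtx G P x → x ∈ (e : Sym2 V) →
      e ≠ σ x → ∃ p ∈ N, e ∈ p := by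
    intro x e hgood hxe heσ
    rcases hcomp x e hxe with h | h | h
    · exact absurd h heσ
    · exact ⟨s(τ1 x, τ2 x), ⟨x, hgood, rfl⟩, by rw [h]; exact Sym2.mem_mk_left _ _⟩
    · exact ⟨s(τ1 x, τ2 x), ⟨x, hgood, rfl⟩, by rw [h]; exact Sym2.mem_mk_right _ _⟩
  -- N covers every edge of G
  have hNcov : ∀ e : G.edgeSet, ∃ p ∈ N, e ∈ p := by
    intro e
    obtain ⟨p, hp, hep⟩ := hPcov (Sum.inr e)
    rcases hclass p hp with ⟨v, rfl⟩ | ⟨g, h, w, hgh, hwg, hwh, hP', rfl⟩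
    · have he : e = σ v := by
        rw [Sym2.mem_iff] at hep
        rcases hep with h | h
        · simp at h
        · exact Sum.inr.inj h
      obtain ⟨x, hxv, hxe⟩ := aux_other G (hσ1 v)
      have hgood : ¬ IsPairVtx G P x := hgoodpt2 v x hxv hxe
      have heσx : e ≠ σ x := by
        rw [he]; intro hh; exact hxv (hσinj x v hh.symm)
      exact hNcov' x e hgood (he ▸ hxe) heσx
    · have hcase : e = g ∨ e = h := by
        rw [Sym2.mem_iff] at hep
        rcases hep with h' | h'
        exacts [Or.inl (Sum.inr.inj h'), Or.inr (Sum.inr.inj h')]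
      rcases hcase with rfl | rfl
      · obtain ⟨x, hxw, hxe⟩ := aux_other G hwg
        exact hNcov' x e (hgoodpt e h w x hgh hwg hwh hP' hxw hxe) hxe (hpairσ e h x hP')
      · obtain ⟨x, hxw, hxe⟩ := aux_other G hwh
        have hP'' : s(Sum.inr e, Sum.inr g) ∈ P := by rwa [Sym2.eq_swap]
        exact hNcov' x e (hgoodpt e g w x (Ne.symm hgh) hwh hwg hP'' hxw hxe) hxe
          (hpairσ e g x hP'')
  -- members of N-pairs at a vertex: membership forces the index vertex
  -- bad set = pair vertices
  have hbad : ∀ v : V, v ∈ badSet G N ↔ IsPairVtx G P v := by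
    intro v
    constructor
    · intro hv
      by_contra hgood
      exact hv s(τ1 v, τ2 v) ⟨v, hgood, rfl⟩ (by
        intro x hx
        rcases Sym2.mem_iff.mp hx with rfl | rfl
        exacts [hτ11 v, hτ21 v])
    · intro hpv p hp hall
      obtain ⟨u, hu, rfl⟩ := hp
      have h1 := hall (τ1 u) (Sym2.mem_mk_left _ _)
      have h2 := hall (τ2 u) (Sym2.mem_mk_right _ _)
      have huv := hKey u v h1 h2
      exact hu (huv ▸ hpv)
  -- matchEdges characterization
  have hme : ∀ p, p ∈ matchEdges G N ↔
      ∃ v, ¬ IsPairVtx G P v ∧ p = s(Sum.inl v, Sum.inr (σ v)) := by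
    intro p
    constructor
    · rintro ⟨v, e1, e2, e3, hN, h1, h2, h3, h31, h32, rfl⟩
      obtain ⟨u, hu, heq⟩ := hN
      rw [Sym2.eq_iff] at heq
      have hv1 : v ∈ (τ1 u : Sym2 V) ∧ v ∈ (τ2 u : Sym2 V) := by
        rcases heq with ⟨ha, hb⟩ | ⟨ha, hb⟩
        exacts [⟨ha ▸ h1, hb ▸ h2⟩, ⟨hb ▸ h2, ha ▸ h1⟩]
      obtain rfl := hKey u v hv1.1 hv1.2
      have h3' : e3 = σ u ∨ e3 = τ1 u ∨ e3 = τ2 u := hcomp u e3 h3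
      have he3 : e3 = σ u := by
        rcases heq with ⟨ha, hb⟩ | ⟨ha, hb⟩ <;>
          rcases h3' with hh | hh | hh <;>
            first
              | exact hh
              | (exact absurd (hh.trans ha.symm) h31) | (exact absurd (hh.trans hb.symm) h32)
              | (exact absurd (hh.trans ha.symm) h32) | (exact absurd (hh.trans hb.symm) h31)
      exact ⟨u, hu, by rw [he3]⟩
    · rintro ⟨v, hgood, rfl⟩
      exact ⟨v, τ1 v, τ2 v, σ v, ⟨v, hgood, rfl⟩, hτ11 v, hτ21 v, hσ1 v,
        fun h => hτ1σ v h.symm, fun h => hτ2σ v h.symm, rfl⟩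
  refine ⟨N, ⟨?_, ?_, hNcov⟩, ?_⟩
  · -- N ⊆ edges of the line graph
    rintro p ⟨v, hgood, rfl⟩
    rw [SimpleGraph.mem_edgeSet]
    exact ⟨hτne v, v, hτ11 v, hτ21 v⟩
  · -- N is a matching
    rintro p ⟨u, hu, rfl⟩ q ⟨v, hv, rfl⟩ hpq a hap haq
    have huv : u ≠ v := fun h => hpq (by rw [h])
    have hau : u ∈ (a : Sym2 V) ∧ a ≠ σ u := by
      rcases Sym2.mem_iff.mp hap with rfl | rfl
      exacts [⟨hτ11 u, hτ1σ u⟩, ⟨hτ21 u, hτ2σ u⟩]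
    have hav : v ∈ (a : Sym2 V) ∧ a ≠ σ v := by
      rcases Sym2.mem_iff.mp haq with rfl | rfl
      exacts [⟨hτ11 v, hτ1σ v⟩, ⟨hτ21 v, hτ2σ v⟩]
    have haeq : (a : Sym2 V) = s(u, v) := (Sym2.mem_and_mem_iff huv).mp ⟨hau.1, hav.1⟩
    obtain ⟨p0, hp0, hap0⟩ := hPcov (Sum.inr a)
    rcases hclass p0 hp0 with ⟨w, rfl⟩ | ⟨g, h, w, hgh, hwg, hwh, hP0, rfl⟩
    · have ha' : a = σ w := by
        rw [Sym2.mem_iff] at hap0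
        rcases hap0 with h' | h'
        · simp at h'
        · exact Sum.inr.inj h'
      have hwa : w ∈ (a : Sym2 V) := ha' ▸ hσ1 w
      rw [haeq, Sym2.mem_iff] at hwa
      rcases hwa with rfl | rfl
      exacts [hau.2 ha', hav.2 ha']
    · have hcase : a = g ∨ a = h := by
        rw [Sym2.mem_iff] at hap0
        rcases hap0 with h' | h'
        exacts [Or.inl (Sum.inr.inj h'), Or.inr (Sum.inr.inj h')]
      have hwa : w ∈ (a : Sym2 V) := by
        rcases hcase with rfl | rfl
        exacts [hwg, hwh]
      rw [haeq, Sym2.mem_iff] at hwa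
      rcases hwa with rfl | rfl
      · rcases hcase with rfl | rfl
        · exact hu (hPVmk w a h hau.1 hwh hgh hP0)
        · exact hu (hPVmk w g a hwg hau.1 hgh hP0)
      · rcases hcase with rfl | rfl
        · exact hv (hPVmk w a h hav.1 hwh hgh hP0)
        · exact hv (hPVmk w g a hwg hav.1 hgh hP0)
  · -- P ∈ MNstar G N
    have hmesub : matchEdges G N ⊆ P := by
      intro p hp
      obtain ⟨v, _, rfl⟩ := (hme p).mp hp
      exact hσ2 v
    refine ⟨P \ matchEdges G N, ?_, ?_, ?_, (Set.union_diff_cancel hmesub).symm⟩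
    · rintro p ⟨hpP, hpnme⟩
      refine ⟨hPE hpP, ?_⟩
      rcases hclass p hpP with ⟨v, rfl⟩ | ⟨g, h, w, hgh, hwg, hwh, hP', rfl⟩
      · have hpv : IsPairVtx G P v := by
          by_contra hgood
          exact hpnme ((hme _).mpr ⟨v, hgood, rfl⟩)
        refine ⟨v, (hbad v).mpr hpv, ?_⟩
        intro a ha
        rcases Sym2.mem_iff.mp ha with rfl | rfl
        · exact Or.inl rfl
        · exact Or.inr ⟨σ v, hσ1 v, rfl⟩
      · refine ⟨w, (hbad w).mpr ⟨g, h, hwg, hwh, hgh, hP'⟩, ?_⟩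
        intro a ha
        rcases Sym2.mem_iff.mp ha with rfl | rfl
        · exact Or.inr ⟨g, hwg, rfl⟩
        · exact Or.inr ⟨h, hwh, rfl⟩
    · intro p hp q hq
      exact hPdisj p hp.1 q hq.1
    · intro v hv a ha
      obtain ⟨g, h, hvg, hvh, hgh, hP'⟩ := (hbad v).mp hv
      have hnotme_pair : s(Sum.inr g, Sum.inr h) ∉ matchEdges G N := by
        intro hc
        obtain ⟨u, _, hequ⟩ := (hme _).mp hc
        simp [Sym2.eq_iff] at hequ
      have hnotme_v : s(Sum.inl v, Sum.inr (σ v)) ∉ matchEdges G N := by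
        intro hc
        obtain ⟨u, hu, hequ⟩ := (hme _).mp hc
        rw [Sym2.eq_iff] at hequ
        rcases hequ with ⟨h1, _⟩ | ⟨h1, _⟩
        · obtain rfl := Sum.inl.inj h1
          exact hu ⟨g, h, hvg, hvh, hgh, hP'⟩
        · simp at h1
      rcases ha with rfl | ⟨e, hve, rfl⟩
      · exact ⟨s(Sum.inl v, Sum.inr (σ v)), ⟨hσ2 v, hnotme_v⟩, Sym2.mem_mk_left _ _⟩
      · have hσg := hL1 v g h hP'
        rcases aux_deg3 G hcubic v hvg hvh (hσ1 v) hgh (fun hh => hσg.1 hh.symm)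
          (fun hh => hσg.2 hh.symm) hve with rfl | rfl | rfl
        · exact ⟨s(Sum.inr e, Sum.inr h), ⟨hP', hnotme_pair⟩, Sym2.mem_mk_left _ _⟩
        · exact ⟨s(Sum.inr g, Sum.inr e), ⟨hP', hnotme_pair⟩, Sym2.mem_mk_right _ _⟩
        · exact ⟨s(Sum.inl v, Sum.inr (σ v)), ⟨hσ2 v, hnotme_v⟩, Sym2.mem_mk_right _ _⟩
end
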